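/- arXiv:math/0402317 — 4 statements merged into one kernel-verified Lean document; each statement's English description precedes it below -/
import Mathlib

section
/- Let A be a positive-definite symmetric linear transformation on ℝⁿ and set f(x) = exp(−π ⟨A x, x⟩). Then for all ξ ∈ ℝⁿ, the Fourier transform of f is f̂(ξ) = (det A)^{−1/2} · exp(−π ⟨A⁻¹ ξ, ξ⟩). -/
open MeasureTheory Real
open scoped RealInnerProductSpace

noncomputable section

/-- The Fourier transform of `f : ℝⁿ → ℂ`:
`f̂ ξ = ∫ x, f x · exp (−2πi x·ξ)`. -/
def FT {n : ℕ} (f : EuclideanSpace ℝ (Fin n) → ℂ) (ξ : EuclideanSpace ℝ (Fin n)) : ℂ :=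
  ∫ x : EuclideanSpace ℝ (Fin n),
    f x * Complex.exp (-2 * (Real.pi : ℂ) * Complex.I * (⟪x, ξ⟫ : ℂ))

/-- `A : ℝⁿ → ℝⁿ` linear is symmetric and positive-definite. -/
def IsPosDefSymm {n : ℕ}
    (A : EuclideanSpace ℝ (Fin n) →ₗ[ℝ] EuclideanSpace ℝ (Fin n)) : Prop :=
  (∀ x y, ⟪A x, y⟫ = ⟪x, A y⟫) ∧ (∀ x, x ≠ 0 → 0 < ⟪A x, x⟫)

/-- The building block `x ↦ x^α · exp (−⟨A x, x⟩ + b·x)`. -/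
def buildingBlock {n : ℕ} (α : Fin n → ℕ)
    (A : EuclideanSpace ℝ (Fin n) →ₗ[ℝ] EuclideanSpace ℝ (Fin n)) (b : Fin n → ℂ) :
    EuclideanSpace ℝ (Fin n) → ℂ :=
  fun x => (∏ j, (x j : ℂ) ^ α j) *
    Complex.exp (-(((⟪A x, x⟫ : ℝ)) : ℂ) + ∑ j, b j * (x j : ℂ))

/-- A function `f : ℝⁿ → ℂ` is nice if it is a complex linear combination of
building blocks `x ↦ x^α · exp (−⟨A x, x⟩ + b·x)` with `A` positive-definite
symmetric. -/
def IsNice {n : ℕ} (f : EuclideanSpace ℝ (Fin n) → ℂ) : Prop :=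
  f ∈ Submodule.span ℂ {g : EuclideanSpace ℝ (Fin n) → ℂ |
    ∃ α A b, IsPosDefSymm A ∧ g = buildingBlock α A b}

/-- The partial derivative in the `j`-th coordinate direction. -/
def pderivCoord {n : ℕ} (j : Fin n) (f : EuclideanSpace ℝ (Fin n) → ℂ) :
    EuclideanSpace ℝ (Fin n) → ℂ :=
  fun x => fderiv ℝ f x (EuclideanSpace.single j 1)

/-- The mixed partial derivative `∂^{δ(α)}/∂x^α`, with `α j` derivatives in
the `j`-th coordinate direction. -/
def mixedDeriv {n : ℕ} (α : Fin n → ℕ) (f : EuclideanSpace ℝ (Fin n) → ℂ) :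
    EuclideanSpace ℝ (Fin n) → ℂ :=
  (List.finRange n).foldr (fun j g => (pderivCoord j)^[α j] g) f


/-- The inverse Fourier transform `φ̌ x = ∫ ξ, φ ξ · exp (2πi ξ·x)`. -/
def invFT {n : ℕ} (φ : EuclideanSpace ℝ (Fin n) → ℂ) (x : EuclideanSpace ℝ (Fin n)) : ℂ :=
  ∫ ξ : EuclideanSpace ℝ (Fin n),
    φ ξ * Complex.exp (2 * (Real.pi : ℂ) * Complex.I * (⟪ξ, x⟫ : ℂ))

end

/-- If `A` is positive-definite symmetric with inverse `B`, then the Fourier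
transform of `x ↦ exp (−π ⟨A x, x⟩)` is `ξ ↦ (det A)^(−1/2) · exp (−π ⟨A⁻¹ ξ, ξ⟩)`. -/
theorem fourier_gaussian_posdef (n : ℕ)
    (A B : EuclideanSpace ℝ (Fin n) →ₗ[ℝ] EuclideanSpace ℝ (Fin n))
    (hA : IsPosDefSymm A)
    (hB₁ : A ∘ₗ B = LinearMap.id) (hB₂ : B ∘ₗ A = LinearMap.id)
    (ξ : EuclideanSpace ℝ (Fin n)) :
    FT (fun x => Complex.exp (-(Real.pi : ℂ) * (⟪A x, x⟫ : ℂ))) ξ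
      = ((LinearMap.det A ^ (-(1/2 : ℝ)) : ℝ) : ℂ) *
          Complex.exp (-(Real.pi : ℂ) * (⟪B ξ, ξ⟫ : ℂ)) := by
  classical
  have hAsymm : A.IsSymmetric := hA.1
  have hn : Module.finrank ℝ (EuclideanSpace ℝ (Fin n)) = n := finrank_euclideanSpace_fin
  set V := hAsymm.eigenvectorBasis hn with hV
  set μ := hAsymm.eigenvalues hn with hμdef
  have hμ : ∀ i, 0 < μ i := by
    intro i
    have hnorm : ‖V i‖ = 1 := V.orthonormal.1 i
    have hne : V i ≠ 0 := by
      intro h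
      rw [h, norm_zero] at hnorm
      norm_num at hnorm
    have h1 : ⟪A (V i), V i⟫ = μ i := by
      rw [hV, hAsymm.apply_eigenvectorBasis hn i]
      rw [real_inner_smul_left, real_inner_self_eq_norm_sq]
      rw [hV] at hnorm
      rw [hnorm]
      simp only [RCLike.ofReal_real_eq_id, id_eq, hμdef]
      ring
    have := hA.2 (V i) hne
    rw [h1] at this
    exact this
  set η : EuclideanSpace ℝ (Fin n) := V.repr ξ with hη
  -- key inner product identities
  have keyA : ∀ x : EuclideanSpace ℝ (Fin n),
      (⟪A x, x⟫ : ℝ) = ∑ i, μ i * (V.repr x i)^2 := by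
    intro x
    rw [← V.repr.inner_map_map (A x) x]
    simp only [PiLp.inner_apply, RCLike.inner_apply, conj_trivial]
    refine Finset.sum_congr rfl fun i _ => ?_
    rw [hV, hAsymm.eigenvectorBasis_apply_self_apply hn x i]
    simp only [RCLike.ofReal_real_eq_id, id_eq, hμdef]
    ring
  have keyI : ∀ x : EuclideanSpace ℝ (Fin n),
      (⟪x, ξ⟫ : ℝ) = ∑ i, (V.repr x i) * η i := by
    intro x
    rw [← V.repr.inner_map_map x ξ]
    simp only [PiLp.inner_apply, RCLike.inner_apply, conj_trivial, hη]
    exact Finset.sum_congr rfl fun i _ => mul_comm _ _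
  have keyB : (⟪B ξ, ξ⟫ : ℝ) = ∑ i, (η i)^2 / μ i := by
    have hABξ : A (B ξ) = ξ := by
      have := congrArg (fun T => T ξ) hB₁
      simpa using this
    have hrepr : ∀ i, V.repr (B ξ) i = η i / μ i := by
      intro i
      have h2 : μ i * V.repr (B ξ) i = η i := by
        have h3 := hAsymm.eigenvectorBasis_apply_self_apply hn (B ξ) i
        rw [hABξ] at h3
        rw [← hV] at h3
        show μ i * V.repr (B ξ) i = V.repr ξ i
        rw [h3]
        simp only [RCLike.ofReal_real_eq_id, id_eq, hμdef]
      field_simp [(hμ i).ne']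
      linarith [h2]
    rw [← V.repr.inner_map_map (B ξ) ξ]
    simp only [PiLp.inner_apply, RCLike.inner_apply, conj_trivial]
    refine Finset.sum_congr rfl fun i _ => ?_
    rw [hrepr i, hη]
    field_simp
  -- determinant
  have hdet : LinearMap.det A = ∏ i, μ i := by
    have hmat : LinearMap.toMatrix V.toBasis V.toBasis A = Matrix.diagonal μ := by
      ext i j
      rw [LinearMap.toMatrix_apply]
      rw [OrthonormalBasis.coe_toBasis, hV, hAsymm.apply_eigenvectorBasis hn j]
      simp only [_root_.map_smul, ← hV, Finsupp.smul_apply]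
      rw [show V.toBasis.repr (V j) = Finsupp.single j 1 by
        rw [← OrthonormalBasis.coe_toBasis V, Module.Basis.repr_self]]
      simp only [Matrix.diagonal, Finsupp.single_apply, smul_eq_mul,
        RCLike.ofReal_real_eq_id, id_eq, hμdef, Matrix.of_apply]
      rcases eq_or_ne j i with h | h
      · simp [h]
      · simp [h, Ne.symm h]
    rw [← LinearMap.det_toMatrix V.toBasis, hmat, Matrix.det_diagonal]
  -- change variables in the integral
  rw [FT]
  have step1 : ∀ x : EuclideanSpace ℝ (Fin n),
      Complex.exp (-(Real.pi : ℂ) * (⟪A x, x⟫ : ℂ)) *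
        Complex.exp (-2 * (Real.pi : ℂ) * Complex.I * (⟪x, ξ⟫ : ℂ)) =
      Complex.exp (- ∑ i, ((Real.pi : ℂ) * μ i) * (V.repr x i : ℂ)^2 +
        ∑ i, (-2 * (Real.pi : ℂ) * Complex.I * η i) * (V.repr x i : ℂ)) := by
    intro x
    rw [← Complex.exp_add]
    congr 1
    rw [keyA x, keyI x]
    push_cast
    rw [Finset.mul_sum, Finset.mul_sum, ← Finset.sum_neg_distrib]
    congr 1
    · refine Finset.sum_congr rfl fun i _ => ?_; ring
    · refine Finset.sum_congr rfl fun i _ => ?_; ring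
  simp_rw [step1]
  -- now substitute x = V.repr.symm (equiv.symm v)
  have mp1 := V.measurePreserving_repr_symm
  rw [← mp1.integral_comp V.repr.symm.toHomeomorph.measurableEmbedding]
  have mp2 := (EuclideanSpace.volume_preserving_symm_measurableEquiv_toLp (Fin n)).symm
  rw [← mp2.integral_comp (MeasurableEquiv.measurableEmbedding _)]
  have step2 : ∀ v : Fin n → ℝ,
      (fun x => Complex.exp (- ∑ i, ((Real.pi : ℂ) * μ i) * (V.repr x i : ℂ)^2 +
        ∑ i, (-2 * (Real.pi : ℂ) * Complex.I * η i) * (V.repr x i : ℂ)))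
        (V.repr.symm ((MeasurableEquiv.toLp 2 (Fin n → ℝ)).symm.symm v)) =
      Complex.exp (- ∑ i, ((Real.pi : ℂ) * μ i) * (v i : ℂ)^2 +
        ∑ i, (-2 * (Real.pi : ℂ) * Complex.I * η i) * (v i : ℂ)) := by
    intro v
    have : ∀ i, V.repr (V.repr.symm ((MeasurableEquiv.toLp 2 (Fin n → ℝ)).symm.symm v)) i
        = v i := by
      intro i
      rw [LinearIsometryEquiv.apply_symm_apply]
      rfl
    simp_rw [this]
  simp_rw [step2]
  rw [GaussianFourier.integral_cexp_neg_sum_mul_add (fun i => by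
    simp only [Complex.mul_re, Complex.ofReal_re, Complex.ofReal_im, mul_zero, sub_zero]
    exact mul_pos Real.pi_pos (hμ i)) (fun i => -2 * (Real.pi : ℂ) * Complex.I * η i)]
  rw [Finset.prod_mul_distrib]
  congr 1
  · -- product of square roots equals (det A)^(-1/2)
    rw [hdet]
    have : ∀ i ∈ Finset.univ, ((Real.pi : ℂ) / ((Real.pi : ℂ) * μ i)) ^ (1/2 : ℂ)
        = (((μ i ^ (-(1/2 : ℝ)) : ℝ)) : ℂ) := by
      intro i _
      have hπ : (Real.pi : ℂ) ≠ 0 := Complex.ofReal_ne_zero.mpr Real.pi_ne_zero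
      have hμi : (μ i : ℂ) ≠ 0 := Complex.ofReal_ne_zero.mpr (hμ i).ne'
      rw [show (Real.pi : ℂ) / ((Real.pi : ℂ) * μ i) = (((μ i)⁻¹ : ℝ) : ℂ) by
        push_cast; field_simp]
      rw [show (1/2 : ℂ) = ((1/2 : ℝ) : ℂ) by norm_num]
      rw [← Complex.ofReal_cpow (inv_nonneg.mpr (hμ i).le)]
      congr 1
      rw [← Real.rpow_neg_one (μ i), ← Real.rpow_mul (hμ i).le]
      norm_num
    rw [Finset.prod_congr rfl this, ← Complex.ofReal_prod]
    congr 1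
    rw [← Real.finset_prod_rpow _ _ (fun i _ => (hμ i).le)]
  · -- product of exponentials
    rw [← Complex.exp_sum]
    congr 1
    rw [keyB]
    push_cast
    rw [Finset.mul_sum]
    refine Finset.sum_congr rfl fun i _ => ?_
    have hμi : (μ i : ℂ) ≠ 0 := Complex.ofReal_ne_zero.mpr (hμ i).ne'
    have hπ : (Real.pi : ℂ) ≠ 0 := Complex.ofReal_ne_zero.mpr Real.pi_ne_zero
    field_simp
    ring_nf
    rw [Complex.I_sq]
    ring
end

section
/- If f : ℝⁿ → ℂ is a nice function, then its Fourier transform f̂ is again a nice function on ℝⁿ. -/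
open MeasureTheory Real
open scoped RealInnerProductSpace

noncomputable section Aux

open scoped FourierTransform

variable {n : ℕ}

local notation "𝔼" => EuclideanSpace ℝ (Fin n)

lemma FT_eq (f : 𝔼 → ℂ) (ξ : 𝔼) : FT f ξ = 𝓕 f ξ := by
  rw [Real.fourier_eq', FT]
  congr 1 with x
  rw [smul_eq_mul, mul_comm]
  congr 1
  push_cast
  ring

lemma isNice_buildingBlock {α : Fin n → ℕ} {A : 𝔼 →ₗ[ℝ] 𝔼} {b : Fin n → ℂ}
    (hA : IsPosDefSymm A) : IsNice (buildingBlock α A b) :=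
  Submodule.subset_span ⟨α, A, b, hA, rfl⟩

/-- Positive definite quadratic forms have a positive lower bound on the sphere. -/
lemma posdef_lower_bound {A : 𝔼 →ₗ[ℝ] 𝔼} (hA : IsPosDefSymm A) :
    ∃ l : ℝ, 0 < l ∧ ∀ x : 𝔼, l * ‖x‖ ^ 2 ≤ ⟪A x, x⟫ := by
  rcases Nat.eq_zero_or_pos n with hn | hn
  · refine ⟨1, one_pos, fun x => ?_⟩
    subst hn
    have hx : x = 0 := Subsingleton.elim x 0
    simp [hx]
  have hsymm : A.IsSymmetric := hA.1
  have hrank : Module.finrank ℝ 𝔼 = n := finrank_euclideanSpace_fin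
  set B := hsymm.eigenvectorBasis hrank with hB
  set μ := hsymm.eigenvalues hrank with hμ
  haveI : Nonempty (Fin n) := ⟨⟨0, hn⟩⟩
  have hμpos : ∀ i, 0 < μ i := by
    intro i
    have h1 : ⟪A (B i), B i⟫ = μ i := by
      rw [hsymm.apply_eigenvectorBasis hrank i, real_inner_smul_left,
        real_inner_self_eq_norm_sq, B.orthonormal.1 i]
      simp; rfl
    have h2 : B i ≠ 0 := B.toBasis.ne_zero i
    have := hA.2 (B i) h2
    rwa [h1] at this
  refine ⟨Finset.univ.inf' Finset.univ_nonempty μ, ?_, fun x => ?_⟩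
  · obtain ⟨i, _, hi⟩ := Finset.exists_mem_eq_inf' Finset.univ_nonempty μ
    rw [hi]; exact hμpos i
  · have hAx : ⟪A x, x⟫ = ∑ i, μ i * (B.repr x i) ^ 2 := by
      rw [← B.repr.inner_map_map (A x) x]
      rw [PiLp.inner_apply]
      refine Finset.sum_congr rfl fun i _ => ?_
      rw [RCLike.inner_apply, conj_trivial, hsymm.eigenvectorBasis_apply_self_apply]
      norm_num
      ring
    have hx : ‖x‖ ^ 2 = ∑ i, (B.repr x i) ^ 2 := by
      rw [← real_inner_self_eq_norm_sq, ← B.repr.inner_map_map x x, PiLp.inner_apply]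
      refine Finset.sum_congr rfl fun i _ => ?_
      rw [RCLike.inner_apply, conj_trivial]; ring
    rw [hAx, hx, Finset.mul_sum]
    refine Finset.sum_le_sum fun i _ => ?_
    have h1 : (0:ℝ) ≤ (B.repr x i) ^ 2 := sq_nonneg _
    have h2 : Finset.univ.inf' Finset.univ_nonempty μ ≤ μ i :=
      Finset.inf'_le _ (Finset.mem_univ i)
    nlinarith

lemma continuous_buildingBlock {α : Fin n → ℕ} {A : 𝔼 →ₗ[ℝ] 𝔼} {b : Fin n → ℂ} :
    Continuous (buildingBlock α A b) := by
  have hc : ∀ j : Fin n, Continuous fun x : 𝔼 => x j := by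
    intro j
    exact (continuous_apply j).comp (PiLp.continuous_ofLp 2 _)
  apply Continuous.mul
  · exact continuous_finset_prod _ fun j _ =>
      ((Complex.continuous_ofReal.comp (hc j)).pow _)
  · apply Complex.continuous_exp.comp
    apply Continuous.add
    · exact (Complex.continuous_ofReal.comp
        ((A.continuous_of_finiteDimensional.inner continuous_id))).neg
    · exact continuous_finset_sum _ fun j _ =>
        continuous_const.mul (Complex.continuous_ofReal.comp (hc j))

lemma abs_coord_le_norm (x : 𝔼) (j : Fin n) : |x j| ≤ ‖x‖ := by
  have := abs_real_inner_le_norm (EuclideanSpace.single j (1:ℝ)) x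
  rwa [EuclideanSpace.inner_single_left, conj_trivial, one_mul,
    EuclideanSpace.norm_single, norm_one, one_mul] at this

lemma norm_buildingBlock_le {α : Fin n → ℕ} {A : 𝔼 →ₗ[ℝ] 𝔼} {b : Fin n → ℂ} (x : 𝔼) :
    ‖buildingBlock α A b x‖ ≤
      ‖x‖ ^ (∑ j, α j) * Real.exp ((∑ j, ‖b j‖) * ‖x‖ - ⟪A x, x⟫) := by
  rw [buildingBlock, norm_mul]
  have hexp : ‖Complex.exp (-(((⟪A x, x⟫ : ℝ)) : ℂ) + ∑ j, b j * (x j : ℂ))‖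
      = Real.exp (-⟪A x, x⟫ + (∑ j, b j * (x j : ℂ)).re) := by
    rw [Complex.norm_exp, Complex.add_re, Complex.neg_re,
      Complex.ofReal_re]
  rw [hexp]
  have h1 : ‖∏ j, (x j : ℂ) ^ α j‖ ≤ ‖x‖ ^ (∑ j, α j) := by
    calc ‖∏ j, (x j : ℂ) ^ α j‖ = ∏ j, |x j| ^ α j := by
          rw [norm_prod]
          refine Finset.prod_congr rfl fun j _ => ?_
          rw [norm_pow, Complex.norm_real, Real.norm_eq_abs]
      _ ≤ ∏ j, ‖x‖ ^ α j := by
          refine Finset.prod_le_prod (fun j _ => by positivity) fun j _ => ?_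
          exact pow_le_pow_left₀ (abs_nonneg _) (abs_coord_le_norm x j) _
      _ = ‖x‖ ^ (∑ j, α j) := by rw [Finset.prod_pow_eq_pow_sum]
  have h2 : (∑ j, b j * (x j : ℂ)).re ≤ (∑ j, ‖b j‖) * ‖x‖ := by
    rw [Complex.re_sum, Finset.sum_mul]
    refine Finset.sum_le_sum fun j _ => ?_
    calc (b j * (x j : ℂ)).re ≤ ‖b j * (x j : ℂ)‖ := Complex.re_le_norm _
      _ = ‖b j‖ * |x j| := by rw [norm_mul, Complex.norm_real, Real.norm_eq_abs]
      _ ≤ ‖b j‖ * ‖x‖ :=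
          mul_le_mul_of_nonneg_left (abs_coord_le_norm x j) (norm_nonneg _)
  refine mul_le_mul h1 (Real.exp_le_exp.2 (by linarith)) (Real.exp_nonneg _) (by positivity)

lemma integrable_aux {l : ℝ} (hl : 0 < l) :
    Integrable (fun x : 𝔼 => Real.exp (-(l/2) * ‖x‖ ^ 2)) := by
  have h := (GaussianFourier.integrable_cexp_neg_mul_sq_norm_add
    (V := 𝔼) (b := (l/2 : ℂ)) (by simp [hl]) 0 0).norm
  refine h.congr (Filter.Eventually.of_forall fun x => ?_)
  have harg : (-(l/2 : ℂ) * (‖x‖:ℂ)^2 + 0 * ((⟪(0:𝔼), x⟫ : ℝ):ℂ))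
      = ((-(l/2) * ‖x‖^2 : ℝ) : ℂ) := by push_cast; ring
  simp only [harg, Complex.norm_exp, Complex.ofReal_re]

/-- Integrability of `‖x‖^k * ‖buildingBlock α A b x‖`. -/
lemma integrable_norm_pow_mul_buildingBlock {α : Fin n → ℕ} {A : 𝔼 →ₗ[ℝ] 𝔼}
    {b : Fin n → ℂ} (hA : IsPosDefSymm A) (k : ℕ) :
    Integrable (fun x : 𝔼 => ‖x‖ ^ k * ‖buildingBlock α A b x‖) := by
  obtain ⟨l, hl, hlb⟩ := posdef_lower_bound hA
  set m := k + ∑ j, α j with hm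
  set C := ∑ j, ‖b j‖ with hC
  have hC0 : 0 ≤ C := Finset.sum_nonneg fun j _ => norm_nonneg _
  set M := (Nat.factorial m : ℝ) * Real.exp ((C+1)^2 / (2*l)) with hM
  have key : ∀ x : 𝔼, ‖x‖ ^ k * ‖buildingBlock α A b x‖ ≤ M * Real.exp (-(l/2) * ‖x‖^2) := by
    intro x
    have h1 : ‖x‖ ^ k * ‖buildingBlock α A b x‖ ≤
        ‖x‖ ^ m * Real.exp (C * ‖x‖ - l * ‖x‖^2) := by
      calc ‖x‖ ^ k * ‖buildingBlock α A b x‖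
          ≤ ‖x‖ ^ k * (‖x‖ ^ (∑ j, α j) * Real.exp (C * ‖x‖ - ⟪A x, x⟫)) :=
            mul_le_mul_of_nonneg_left (norm_buildingBlock_le x) (by positivity)
        _ = ‖x‖ ^ m * Real.exp (C * ‖x‖ - ⟪A x, x⟫) := by rw [hm, pow_add, mul_assoc]
        _ ≤ ‖x‖ ^ m * Real.exp (C * ‖x‖ - l * ‖x‖^2) := by
            refine mul_le_mul_of_nonneg_left (Real.exp_le_exp.2 ?_) (by positivity)
            linarith [hlb x]
    have h2 : ‖x‖ ^ m ≤ (Nat.factorial m : ℝ) * Real.exp ‖x‖ := by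
      have hfac : (0:ℝ) < Nat.factorial m := by positivity
      have h := Real.pow_div_factorial_le_exp ‖x‖ (norm_nonneg x) m
      rw [div_le_iff₀ hfac] at h
      linarith [h]
    have h3 : (C+1)*‖x‖ - (l/2)*‖x‖^2 ≤ (C+1)^2/(2*l) := by
      rw [le_div_iff₀ (by linarith : (0:ℝ) < 2*l)]
      nlinarith [sq_nonneg (l*‖x‖ - (C+1))]
    have h3' : (C+1) * ‖x‖ - l * ‖x‖^2 ≤ (C+1)^2/(2*l) + (-(l/2) * ‖x‖^2) := by
      nlinarith [h3]
    calc ‖x‖ ^ k * ‖buildingBlock α A b x‖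
        ≤ ‖x‖ ^ m * Real.exp (C * ‖x‖ - l * ‖x‖^2) := h1
      _ ≤ (Nat.factorial m : ℝ) * Real.exp ‖x‖ * Real.exp (C * ‖x‖ - l * ‖x‖^2) := by
          exact mul_le_mul_of_nonneg_right h2 (Real.exp_nonneg _)
      _ = (Nat.factorial m : ℝ) * Real.exp ((C+1) * ‖x‖ - l * ‖x‖^2) := by
          rw [mul_assoc, ← Real.exp_add]; ring_nf
      _ ≤ (Nat.factorial m : ℝ) * Real.exp ((C+1)^2/(2*l) + (-(l/2) * ‖x‖^2)) := by
          exact mul_le_mul_of_nonneg_left (Real.exp_le_exp.2 h3') (by positivity)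
      _ = M * Real.exp (-(l/2) * ‖x‖^2) := by rw [hM, Real.exp_add, mul_assoc]
  have hmeas : AEStronglyMeasurable (fun x : 𝔼 => ‖x‖ ^ k * ‖buildingBlock α A b x‖) volume :=
    ((continuous_norm.pow k).mul continuous_buildingBlock.norm).aestronglyMeasurable
  refine Integrable.mono' ((integrable_aux hl).const_mul M) hmeas
    (Filter.Eventually.of_forall fun x => ?_)
  rw [Real.norm_eq_abs, abs_of_nonneg (by positivity)]
  exact key x

lemma integrable_buildingBlock {α : Fin n → ℕ} {A : 𝔼 →ₗ[ℝ] 𝔼} {b : Fin n → ℂ}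
    (hA : IsPosDefSymm A) : Integrable (buildingBlock α A b) := by
  have h := integrable_norm_pow_mul_buildingBlock (α := α) (b := b) hA 0
  simp only [pow_zero, one_mul] at h
  exact (integrable_norm_iff continuous_buildingBlock.aestronglyMeasurable).mp h

lemma integrable_mul_buildingBlock {α : Fin n → ℕ} {A : 𝔼 →ₗ[ℝ] 𝔼} {b : Fin n → ℂ}
    (hA : IsPosDefSymm A) :
    Integrable (fun x : 𝔼 => ‖x‖ * ‖buildingBlock α A b x‖) := by
  have h := integrable_norm_pow_mul_buildingBlock (α := α) (b := b) hA 1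
  simpa using h

end Aux

noncomputable section Gauss

open scoped FourierTransform
open Complex

variable {n : ℕ}

local notation "𝔼" => EuclideanSpace ℝ (Fin n)

lemma eigenvalues_pos {A : 𝔼 →ₗ[ℝ] 𝔼} (hA : IsPosDefSymm A) (hsymm : A.IsSymmetric)
    (i : Fin n) : 0 < hsymm.eigenvalues finrank_euclideanSpace_fin i := by
  set B := hsymm.eigenvectorBasis finrank_euclideanSpace_fin
  have h1 : ⟪A (B i), B i⟫ = hsymm.eigenvalues finrank_euclideanSpace_fin i := by
    rw [hsymm.apply_eigenvectorBasis finrank_euclideanSpace_fin i, real_inner_smul_left,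
      real_inner_self_eq_norm_sq, B.orthonormal.1 i]
    norm_num
  have h2 : B i ≠ 0 := B.toBasis.ne_zero i
  have := hA.2 (B i) h2
  rwa [h1] at this

/-- The Fourier transform of a Gaussian building block (no polynomial factor)
is nice. -/
theorem isNice_FT_buildingBlock_zero {A : 𝔼 →ₗ[ℝ] 𝔼} (hA : IsPosDefSymm A) (b : Fin n → ℂ) :
    IsNice (FT (buildingBlock (fun _ => 0) A b)) := by
  classical
  have hsymm : A.IsSymmetric := hA.1
  set B := hsymm.eigenvectorBasis finrank_euclideanSpace_fin with hBdef
  set μ := hsymm.eigenvalues finrank_euclideanSpace_fin with hμdef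
  have hμpos : ∀ i, 0 < μ i := eigenvalues_pos hA hsymm
  have hμne : ∀ i, (μ i : ℂ) ≠ 0 := fun i => by
    exact_mod_cast ne_of_gt (hμpos i)
  -- data for the transformed Gaussian
  set c : Fin n → ℂ := fun i => ∑ j, b j * (B i j : ℂ) with hcdef
  set b' : Fin n → ℂ := fun j => ∑ i, (-(π:ℂ) * Complex.I * c i / (μ i : ℂ)) * (B i j : ℂ)
    with hb'def
  set A' : 𝔼 →ₗ[ℝ] 𝔼 := ∑ i, (π^2 / μ i) • ((innerₗ 𝔼 (B i)).smulRight (B i)) with hA'def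
  have hA'apply : ∀ x : 𝔼, A' x = ∑ i, (π^2 / μ i * ⟪B i, x⟫) • B i := by
    intro x
    rw [hA'def]
    simp only [LinearMap.coe_sum, Finset.sum_apply, LinearMap.smul_apply,
      LinearMap.smulRight_apply, innerₗ_apply_apply, smul_smul]
  have hA'inner : ∀ x y : 𝔼, ⟪A' x, y⟫ = ∑ i, (π^2 / μ i) * ⟪B i, x⟫ * ⟪B i, y⟫ := by
    intro x y
    rw [hA'apply, sum_inner]
    refine Finset.sum_congr rfl fun i _ => ?_
    rw [real_inner_smul_left]
  have hA' : IsPosDefSymm A' := by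
    constructor
    · intro x y
      rw [hA'inner, real_inner_comm, hA'inner]
      refine Finset.sum_congr rfl fun i _ => ?_
      ring
    · intro x hx
      rw [hA'inner]
      have hex : ∃ i, ⟪B i, x⟫ ≠ 0 := by
        by_contra h
        push_neg at h
        apply hx
        have : ∀ i, B.repr x i = 0 := fun i => by
          rw [B.repr_apply_apply]; simpa using h i
        have h0 : B.repr x = 0 := by
          ext i; exact this i
        have := congrArg B.repr.symm h0
        rwa [B.repr.symm_apply_apply, map_zero] at this
      obtain ⟨i0, hi0⟩ := hex
      refine Finset.sum_pos' (fun i _ => ?_) ⟨i0, Finset.mem_univ i0, ?_⟩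
      · have h1 : 0 < π^2 / μ i := div_pos (by positivity) (hμpos i)
        nlinarith [sq_nonneg (⟪B i, x⟫ : ℝ)]
      · have h1 : 0 < π^2 / μ i0 := div_pos (by positivity) (hμpos i0)
        have h2 : (0:ℝ) < ⟪B i0, x⟫ * ⟪B i0, x⟫ := mul_self_pos.mpr hi0
        calc (0:ℝ) < (π^2 / μ i0) * (⟪B i0, x⟫ * ⟪B i0, x⟫) := mul_pos h1 h2
          _ = π^2 / μ i0 * ⟪B i0, x⟫ * ⟪B i0, x⟫ := by ring
  -- the key integral computation
  have key : FT (buildingBlock (fun _ => 0) A b)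
      = (∏ i, ((π:ℂ) / (μ i : ℂ)) ^ (1/2 : ℂ) * Complex.exp ((c i)^2 / (4 * (μ i : ℂ))))
        • buildingBlock (fun _ => 0) A' b' := by
    funext ξ
    set η : Fin n → ℝ := fun i => B.repr ξ i with hηdef
    set d : Fin n → ℂ := fun i => c i - 2 * (π:ℂ) * Complex.I * ((η i : ℝ) : ℂ) with hddef
    have hη : ∀ i, ((η i : ℝ) : ℂ) = ∑ j, (B i j : ℂ) * (ξ j : ℂ) := by
      intro i
      have : η i = ∑ j, B i j * ξ j := by
        rw [hηdef]
        simp only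
        rw [B.repr_apply_apply, PiLp.inner_apply]
        exact Finset.sum_congr rfl fun j _ => by rw [RCLike.inner_apply, conj_trivial]; exact mul_comm _ _
      rw [this]
      push_cast
      rfl
    -- Step 1: integrand in exponential form
    have h1 : ∀ x : 𝔼, buildingBlock (fun _ => 0) A b x
          * Complex.exp (-2 * (Real.pi : ℂ) * Complex.I * ((⟪x, ξ⟫ : ℝ) : ℂ))
        = Complex.exp ((-(((⟪A x, x⟫ : ℝ)) : ℂ) + ∑ j, b j * (x j : ℂ))
            + (-2 * (Real.pi : ℂ) * Complex.I * ((⟪x, ξ⟫ : ℝ) : ℂ))) := by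
      intro x
      rw [buildingBlock]
      simp [← Complex.exp_add]
    -- Step 2: change of variables via the eigenbasis
    have hemb : MeasurableEmbedding (B.repr.symm : EuclideanSpace ℝ (Fin n) → 𝔼) :=
      B.repr.symm.toHomeomorph.measurableEmbedding
    have h2 := (B.measurePreserving_repr_symm).integral_comp hemb
      (fun x : 𝔼 => Complex.exp ((-(((⟪A x, x⟫ : ℝ)) : ℂ) + ∑ j, b j * (x j : ℂ))
            + (-2 * (Real.pi : ℂ) * Complex.I * ((⟪x, ξ⟫ : ℝ) : ℂ))))
    -- Step 3: the composed integrand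
    have h3 : ∀ y : EuclideanSpace ℝ (Fin n),
        Complex.exp ((-(((⟪A (B.repr.symm y), B.repr.symm y⟫ : ℝ)) : ℂ)
            + ∑ j, b j * (((B.repr.symm y) j : ℝ) : ℂ))
            + (-2 * (Real.pi : ℂ) * Complex.I * ((⟪B.repr.symm y, ξ⟫ : ℝ) : ℂ)))
        = Complex.exp (-(∑ i, (μ i : ℂ) * (y i : ℂ)^2) + ∑ i, d i * (y i : ℂ)) := by
      intro y
      have e1 : ⟪A (B.repr.symm y), B.repr.symm y⟫ = ∑ i, μ i * (y i)^2 := by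
        rw [← B.repr.inner_map_map (A (B.repr.symm y)) (B.repr.symm y), PiLp.inner_apply]
        refine Finset.sum_congr rfl fun i _ => ?_
        rw [RCLike.inner_apply, conj_trivial, hsymm.eigenvectorBasis_apply_self_apply,
          B.repr.apply_symm_apply]
        norm_num
        ring
      have hx : ∀ j, (B.repr.symm y) j = ∑ i, y i * B i j := by
        intro j
        have h := congrArg (fun z : 𝔼 => EuclideanSpace.proj (𝕜 := ℝ) j z) (B.sum_repr_symm y)
        simp only [map_sum, _root_.map_smul, smul_eq_mul] at h
        have hproj : ∀ z : 𝔼, EuclideanSpace.proj (𝕜 := ℝ) j z = z j := fun z => rfl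
        rw [hproj] at h
        rw [← h]
        exact Finset.sum_congr rfl fun i _ => by rw [hproj]
      have e2 : (∑ j, b j * (((B.repr.symm y) j : ℝ) : ℂ)) = ∑ i, c i * (y i : ℂ) := by
        calc (∑ j, b j * (((B.repr.symm y) j : ℝ) : ℂ))
            = ∑ j, ∑ i, b j * ((y i : ℂ) * (B i j : ℂ)) := by
              refine Finset.sum_congr rfl fun j _ => ?_
              rw [hx j]
              push_cast
              rw [Finset.mul_sum]
          _ = ∑ i, ∑ j, b j * ((y i : ℂ) * (B i j : ℂ)) := Finset.sum_comm
          _ = ∑ i, c i * (y i : ℂ) := by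
              refine Finset.sum_congr rfl fun i _ => ?_
              rw [hcdef]
              simp only
              rw [Finset.sum_mul]
              refine Finset.sum_congr rfl fun j _ => by ring
      have e3 : ⟪B.repr.symm y, ξ⟫ = ∑ i, y i * η i := by
        rw [← B.repr.inner_map_map (B.repr.symm y) ξ, B.repr.apply_symm_apply,
          PiLp.inner_apply]
        exact Finset.sum_congr rfl fun i _ => by rw [RCLike.inner_apply, conj_trivial]; exact mul_comm _ _
      rw [e1, e2, e3]
      congr 1
      have hdsum : ∑ i, d i * (y i : ℂ)
          = ∑ i, c i * (y i : ℂ) - 2 * (π:ℂ) * Complex.I * ∑ i, ((y i : ℂ) * ((η i : ℝ):ℂ)) := by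
        simp only [hddef]
        rw [Finset.mul_sum, ← Finset.sum_sub_distrib]
        exact Finset.sum_congr rfl fun i _ => by ring
      rw [hdsum]
      push_cast
      ring
    -- Step 4: from EuclideanSpace to Pi
    have h4 : (∫ y : EuclideanSpace ℝ (Fin n),
        Complex.exp (-(∑ i, (μ i : ℂ) * (y i : ℂ)^2) + ∑ i, d i * (y i : ℂ)))
        = ∫ v : Fin n → ℝ,
        Complex.exp (-(∑ i, (μ i : ℂ) * (v i : ℂ)^2) + ∑ i, d i * (v i : ℂ)) := by
      rw [← MeasurePreserving.integral_comp
        (EuclideanSpace.volume_preserving_symm_measurableEquiv_toLp (Fin n)).symm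
        (MeasurableEquiv.measurableEmbedding _)
        (fun y : EuclideanSpace ℝ (Fin n) =>
          Complex.exp (-(∑ i, (μ i : ℂ) * (y i : ℂ)^2) + ∑ i, d i * (y i : ℂ)))]
      rfl
    -- Step 5: the 1-dimensional Gaussian integrals
    have h5 := GaussianFourier.integral_cexp_neg_sum_mul_add
      (b := fun i => (μ i : ℂ)) (fun i => by simpa using hμpos i) d
    -- Step 6: assemble
    have hb'sum : ∑ j, b' j * (ξ j : ℂ)
        = ∑ i, (-(π:ℂ) * Complex.I * c i / (μ i : ℂ)) * ((η i : ℝ) : ℂ) := by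
      calc ∑ j, b' j * (ξ j : ℂ)
          = ∑ j, ∑ i, (-(π:ℂ) * Complex.I * c i / (μ i : ℂ)) * ((B i j : ℂ) * (ξ j : ℂ)) := by
            refine Finset.sum_congr rfl fun j _ => ?_
            rw [hb'def]
            simp only
            rw [Finset.sum_mul]
            exact Finset.sum_congr rfl fun i _ => by ring
        _ = ∑ i, ∑ j, (-(π:ℂ) * Complex.I * c i / (μ i : ℂ)) * ((B i j : ℂ) * (ξ j : ℂ)) :=
            Finset.sum_comm
        _ = ∑ i, (-(π:ℂ) * Complex.I * c i / (μ i : ℂ)) * ((η i : ℝ) : ℂ) := by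
            refine Finset.sum_congr rfl fun i _ => ?_
            rw [hη i]
            exact (Finset.mul_sum _ _ _).symm
    have hA'ξ : ⟪A' ξ, ξ⟫ = ∑ i, (π^2 / μ i) * (η i)^2 := by
      rw [hA'inner]
      refine Finset.sum_congr rfl fun i _ => ?_
      simp only [hηdef]
      rw [B.repr_apply_apply]
      ring
    have perterm : ∀ i : Fin n, (d i)^2 / (4 * (μ i:ℂ))
        = (c i)^2 / (4*(μ i:ℂ)) + (-(((π^2 / μ i * (η i)^2 : ℝ)) : ℂ)
            + (-(π:ℂ) * Complex.I * c i / (μ i:ℂ)) * ((η i : ℝ):ℂ)) := by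
      intro i
      simp only [hddef]
      push_cast
      linear_combination ((π:ℂ)^2 * ((η i : ℝ):ℂ)^2 / ((μ i : ℝ):ℂ)) * Complex.I_sq
    have hsumd : ∑ i, (d i)^2 / (4 * (μ i : ℂ))
        = ∑ i, (c i)^2 / (4 * (μ i : ℂ))
          + (-(((⟪A' ξ, ξ⟫ : ℝ)) : ℂ) + ∑ j, b' j * (ξ j : ℂ)) := by
      rw [hb'sum, hA'ξ]
      calc ∑ i, (d i)^2/(4*(μ i:ℂ))
          = ∑ i, ((c i)^2/(4*(μ i:ℂ)) + (-(((π^2 / μ i * (η i)^2 : ℝ)) : ℂ)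
              + (-(π:ℂ) * Complex.I * c i / (μ i:ℂ)) * ((η i : ℝ):ℂ))) :=
            Finset.sum_congr rfl fun i _ => perterm i
        _ = ∑ i, (c i)^2/(4*(μ i:ℂ))
            + (-((((∑ i, π^2 / μ i * (η i)^2 : ℝ)) : ℂ))
              + ∑ i, (-(π:ℂ) * Complex.I * c i / (μ i:ℂ)) * ((η i : ℝ):ℂ)) := by
            rw [Finset.sum_add_distrib, Finset.sum_add_distrib]
            congr 2
            push_cast
            rw [← Finset.sum_neg_distrib]
    calc FT (buildingBlock (fun _ => 0) A b) ξ
        = ∫ x : 𝔼, buildingBlock (fun _ => 0) A b x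
            * Complex.exp (-2 * (Real.pi:ℂ) * Complex.I * ((⟪x, ξ⟫:ℝ):ℂ)) := rfl
      _ = ∫ x : 𝔼, Complex.exp ((-(((⟪A x, x⟫ : ℝ)) : ℂ) + ∑ j, b j * (x j : ℂ))
            + (-2 * (Real.pi : ℂ) * Complex.I * ((⟪x, ξ⟫ : ℝ) : ℂ))) :=
          integral_congr_ae (Filter.Eventually.of_forall fun x => h1 x)
      _ = ∫ y : EuclideanSpace ℝ (Fin n),
            Complex.exp ((-(((⟪A (B.repr.symm y), B.repr.symm y⟫ : ℝ)) : ℂ)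
            + ∑ j, b j * (((B.repr.symm y) j : ℝ) : ℂ))
            + (-2 * (Real.pi : ℂ) * Complex.I * ((⟪B.repr.symm y, ξ⟫ : ℝ) : ℂ))) := h2.symm
      _ = ∫ y : EuclideanSpace ℝ (Fin n),
            Complex.exp (-(∑ i, (μ i : ℂ) * (y i : ℂ)^2) + ∑ i, d i * (y i : ℂ)) :=
          integral_congr_ae (Filter.Eventually.of_forall fun y => h3 y)
      _ = ∫ v : Fin n → ℝ,
            Complex.exp (-(∑ i, (μ i : ℂ) * (v i : ℂ)^2) + ∑ i, d i * (v i : ℂ)) := h4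
      _ = ∏ i, ((π:ℂ) / (μ i:ℂ)) ^ (1/2:ℂ) * Complex.exp ((d i)^2 / (4 * (μ i:ℂ))) := h5
      _ = ((∏ i, ((π:ℂ) / (μ i : ℂ)) ^ (1/2 : ℂ) * Complex.exp ((c i)^2 / (4 * (μ i : ℂ))))
            • buildingBlock (fun _ => 0) A' b') ξ := by
          rw [Pi.smul_apply, smul_eq_mul, buildingBlock]
          simp only [pow_zero, Finset.prod_const_one, one_mul]
          rw [Finset.prod_mul_distrib, Finset.prod_mul_distrib, ← Complex.exp_sum,
            ← Complex.exp_sum, hsumd, Complex.exp_add]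
          ring
  rw [key]
  exact Submodule.smul_mem _ _ (isNice_buildingBlock hA')

end Gauss

noncomputable section Deriv

open scoped FourierTransform
open Complex

variable {n : ℕ}

local notation "𝔼" => EuclideanSpace ℝ (Fin n)

/-- The `j`-th coordinate, as a continuous linear map into `ℂ`. -/
def coordC (j : Fin n) : 𝔼 →L[ℝ] ℂ :=
  Complex.ofRealCLM.comp (EuclideanSpace.proj j)

lemma coordC_apply (j : Fin n) (x : 𝔼) : coordC j x = (x j : ℂ) := rfl

lemma hasFDerivAt_buildingBlock {α : Fin n → ℕ} {A : 𝔼 →ₗ[ℝ] 𝔼} {b : Fin n → ℂ}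
    (hsym : ∀ x y : 𝔼, ⟪A x, y⟫ = ⟪x, A y⟫) (x : 𝔼) :
    HasFDerivAt (buildingBlock α A b)
      (Complex.exp (-(((⟪A x, x⟫ : ℝ)) : ℂ) + ∑ j, b j * (x j : ℂ)) •
          (∑ i, (∏ k ∈ Finset.univ.erase i, (x k : ℂ) ^ α k) •
            (((α i : ℂ) * (x i : ℂ) ^ (α i - 1)) • coordC i))
        + ((∏ j, (x j : ℂ) ^ α j) *
            Complex.exp (-(((⟪A x, x⟫ : ℝ)) : ℂ) + ∑ j, b j * (x j : ℂ))) •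
          ((-2 : ℂ) • (Complex.ofRealCLM.comp (innerSL ℝ (A x))) + ∑ j, b j • coordC j)) x := by
  classical
  -- derivative of the polynomial part
  have hP : HasFDerivAt (fun y : 𝔼 => ∏ j, (y j : ℂ) ^ α j)
      (∑ i, (∏ k ∈ Finset.univ.erase i, (x k : ℂ) ^ α k) •
        (((α i : ℂ) * (x i : ℂ) ^ (α i - 1)) • coordC i)) x := by
    refine HasFDerivAt.finset_prod fun i _ => ?_
    exact (hasDerivAt_pow (α i) ((x i : ℂ))).comp_hasFDerivAt x (coordC i).hasFDerivAt
  -- derivative of the quadratic form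
  have hQ1 : HasFDerivAt (fun y : 𝔼 => ⟪A y, y⟫) ((2:ℝ) • (innerSL ℝ (A x))) x := by
    have hEq : ((2:ℝ) • (innerSL ℝ (A x)) : 𝔼 →L[ℝ] ℝ)
        = (fderivInnerCLM ℝ (A.toContinuousLinearMap x, x)).comp
            ((A.toContinuousLinearMap).prod (ContinuousLinearMap.id ℝ 𝔼)) := by
      ext v
      simp only [ContinuousLinearMap.smul_apply, innerSL_apply_apply, ContinuousLinearMap.comp_apply,
        fderivInnerCLM_apply, ContinuousLinearMap.prod_apply, ContinuousLinearMap.id_apply,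
        LinearMap.coe_toContinuousLinearMap']
      rw [smul_eq_mul]
      have h1 := hsym x v
      have h2 := real_inner_comm (A v) x
      linarith
    rw [hEq]
    exact (A.toContinuousLinearMap.hasFDerivAt (x := x)).inner ℝ (hasFDerivAt_id x)
  -- derivative of the exponent
  have hQ : HasFDerivAt (fun y : 𝔼 => -(((⟪A y, y⟫ : ℝ)) : ℂ) + ∑ j, b j * (y j : ℂ))
      ((-2 : ℂ) • (Complex.ofRealCLM.comp (innerSL ℝ (A x))) + ∑ j, b j • coordC j) x := by
    have h1 : HasFDerivAt (fun y : 𝔼 => -(((⟪A y, y⟫ : ℝ)) : ℂ))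
        ((-2 : ℂ) • (Complex.ofRealCLM.comp (innerSL ℝ (A x)))) x := by
      have hEq : ((-2 : ℂ) • (Complex.ofRealCLM.comp (innerSL ℝ (A x))) : 𝔼 →L[ℝ] ℂ)
          = -(Complex.ofRealCLM.comp ((2:ℝ) • (innerSL ℝ (A x)))) := by
        ext v
        simp only [ContinuousLinearMap.smul_apply, ContinuousLinearMap.comp_apply,
          ContinuousLinearMap.neg_apply, innerSL_apply_apply, Complex.ofRealCLM_apply, smul_eq_mul]
        push_cast
        ring
      rw [hEq]
      exact (Complex.ofRealCLM.hasFDerivAt.comp x hQ1).neg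
    have h3 : HasFDerivAt (fun y : 𝔼 => ∑ j, b j * (y j : ℂ))
        (∑ j, b j • coordC j) x := by
      have h4 : (fun y : 𝔼 => ∑ j, b j * (y j : ℂ))
          = fun y => (∑ j, b j • coordC j : 𝔼 →L[ℝ] ℂ) y := by
        funext y
        simp [ContinuousLinearMap.sum_apply, coordC_apply, smul_eq_mul]
      rw [h4]
      exact (∑ j, b j • coordC j : 𝔼 →L[ℝ] ℂ).hasFDerivAt
    exact h1.add h3
  have hE := hQ.cexp
  have := hP.mul hE
  refine this.congr_fderiv ?_
  rw [smul_smul]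
  abel

lemma differentiable_buildingBlock {α : Fin n → ℕ} {A : 𝔼 →ₗ[ℝ] 𝔼} {b : Fin n → ℂ}
    (hA : IsPosDefSymm A) : Differentiable ℝ (buildingBlock α A b) :=
  fun x => (hasFDerivAt_buildingBlock hA.1 x).differentiableAt

lemma pderivCoord_buildingBlock {α : Fin n → ℕ} {A : 𝔼 →ₗ[ℝ] 𝔼} {b : Fin n → ℂ}
    (hA : IsPosDefSymm A) (j : Fin n) :
    pderivCoord j (buildingBlock α A b)
      = (α j : ℂ) • buildingBlock (Function.update α j (α j - 1)) A b
        + b j • buildingBlock α A b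
        + ∑ k, (-2 * (((A (EuclideanSpace.single j 1)) k : ℝ) : ℂ)) •
            buildingBlock (Function.update α k (α k + 1)) A b := by
  classical
  funext x
  have hD := (hasFDerivAt_buildingBlock (α := α) (b := b) hA.1 x).fderiv
  have e_coord : ∀ i : Fin n, coordC (n := n) i (EuclideanSpace.single j 1)
      = if i = j then 1 else 0 := by
    intro i
    rw [coordC_apply, EuclideanSpace.single_apply]
    split <;> simp
  have e_inner : (innerSL ℝ (A x)) (EuclideanSpace.single j 1)
      = ∑ k, (A (EuclideanSpace.single j 1)) k * x k := by
    rw [innerSL_apply_apply, hA.1, real_inner_comm, PiLp.inner_apply]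
    exact Finset.sum_congr rfl fun k _ => by rw [RCLike.inner_apply, conj_trivial]; exact mul_comm _ _
  have hprod1 : (α j : ℂ) * ((x j : ℂ)^(α j - 1) * ∏ k ∈ Finset.univ.erase j, (x k : ℂ)^(α k))
      = (α j : ℂ) * ∏ i, (x i : ℂ)^(Function.update α j (α j - 1) i) := by
    rcases Nat.eq_zero_or_pos (α j) with h0 | h0
    · simp [h0]
    · congr 1
      rw [← Finset.mul_prod_erase Finset.univ _ (Finset.mem_univ j), Function.update_self]
      congr 1
      exact Finset.prod_congr rfl fun i hi => by
        rw [Function.update_of_ne (Finset.ne_of_mem_erase hi)]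
  have hprod2 : ∀ k : Fin n, (∏ i, (x i : ℂ) ^ (Function.update α k (α k + 1) i))
      = (x k : ℂ) * ∏ i, (x i : ℂ)^(α i) := by
    intro k
    rw [← Finset.mul_prod_erase Finset.univ
        (fun i => (x i : ℂ)^(Function.update α k (α k + 1) i)) (Finset.mem_univ k),
      ← Finset.mul_prod_erase Finset.univ (fun i => (x i : ℂ)^(α i)) (Finset.mem_univ k)]
    have : (∏ i ∈ Finset.univ.erase k, (x i : ℂ)^(Function.update α k (α k + 1) i))
        = ∏ i ∈ Finset.univ.erase k, (x i : ℂ)^(α i) :=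
      Finset.prod_congr rfl fun i hi => by
        rw [Function.update_of_ne (Finset.ne_of_mem_erase hi)]
    rw [this, Function.update_self, pow_succ]
    ring
  show fderiv ℝ (buildingBlock α A b) x (EuclideanSpace.single j 1) = _
  rw [hD]
  simp only [ContinuousLinearMap.add_apply, ContinuousLinearMap.smul_apply,
    ContinuousLinearMap.sum_apply, ContinuousLinearMap.comp_apply, Complex.ofRealCLM_apply,
    e_coord, e_inner, smul_eq_mul, mul_ite, mul_one, mul_zero, Finset.sum_ite_eq',
    Finset.mem_univ, if_true]
  simp only [Pi.add_apply, Pi.smul_apply, Finset.sum_apply, smul_eq_mul, buildingBlock]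
  set E := Complex.exp (-(((⟪A x, x⟫ : ℝ)) : ℂ) + ∑ i, b i * (x i : ℂ)) with hE
  have hsum2 : (∑ k, -2 * (((A (EuclideanSpace.single j 1)) k : ℝ) : ℂ) *
        ((∏ i, (x i : ℂ) ^ (Function.update α k (α k + 1) i)) * E))
      = -2 * (∑ k, (((A (EuclideanSpace.single j 1)) k : ℝ) : ℂ) * (x k : ℂ)) *
        ((∏ i, (x i : ℂ)^(α i)) * E) := by
    calc (∑ k, -2 * (((A (EuclideanSpace.single j 1)) k : ℝ) : ℂ) *
          ((∏ i, (x i : ℂ) ^ (Function.update α k (α k + 1) i)) * E))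
        = ∑ k, ((((A (EuclideanSpace.single j 1)) k : ℝ) : ℂ) * (x k : ℂ))
            * (-2 * ((∏ i, (x i : ℂ)^(α i)) * E)) :=
          Finset.sum_congr rfl fun k _ => by rw [hprod2 k]; ring
      _ = (∑ k, (((A (EuclideanSpace.single j 1)) k : ℝ) : ℂ) * (x k : ℂ))
            * (-2 * ((∏ i, (x i : ℂ)^(α i)) * E)) := by rw [← Finset.sum_mul]
      _ = -2 * (∑ k, (((A (EuclideanSpace.single j 1)) k : ℝ) : ℂ) * (x k : ℂ)) *
          ((∏ i, (x i : ℂ)^(α i)) * E) := by ring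
  have hprod1' : (α j : ℂ) * ((∏ i, (x i : ℂ)^(Function.update α j (α j - 1) i)) * E)
      = E * ((∏ k ∈ Finset.univ.erase j, (x k : ℂ)^(α k))
          * ((α j : ℂ) * (x j : ℂ)^(α j - 1))) := by
    calc (α j : ℂ) * ((∏ i, (x i : ℂ)^(Function.update α j (α j - 1) i)) * E)
        = ((α j : ℂ) * ∏ i, (x i : ℂ)^(Function.update α j (α j - 1) i)) * E := by ring
      _ = ((α j : ℂ) * ((x j : ℂ)^(α j - 1)
            * ∏ k ∈ Finset.univ.erase j, (x k : ℂ)^(α k))) * E := by rw [← hprod1]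
      _ = E * ((∏ k ∈ Finset.univ.erase j, (x k : ℂ)^(α k))
            * ((α j : ℂ) * (x j : ℂ)^(α j - 1))) := by ring
  rw [hsum2, hprod1']
  push_cast
  ring

/-- Niceness is preserved by coordinate partial derivatives. -/
lemma isNice_pderiv {g : 𝔼 → ℂ} (hg : IsNice g) :
    Differentiable ℝ g ∧ ∀ j, IsNice (pderivCoord j g) := by
  refine Submodule.span_induction
    (p := fun g _ => Differentiable ℝ g ∧ ∀ j, IsNice (pderivCoord j g)) ?_ ?_ ?_ ?_ hg
  · rintro g ⟨α, A, b, hA, rfl⟩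
    refine ⟨differentiable_buildingBlock hA, fun j => ?_⟩
    rw [pderivCoord_buildingBlock hA j]
    refine Submodule.add_mem _ (Submodule.add_mem _ ?_ ?_) ?_
    · exact Submodule.smul_mem _ _ (isNice_buildingBlock hA)
    · exact Submodule.smul_mem _ _ (isNice_buildingBlock hA)
    · exact Submodule.sum_mem _ fun k _ => Submodule.smul_mem _ _ (isNice_buildingBlock hA)
  · refine ⟨differentiable_const 0, fun j => ?_⟩
    have h0 : pderivCoord (n := n) j (0 : 𝔼 → ℂ) = 0 := by
      funext x
      rw [pderivCoord]
      rw [show ((0 : 𝔼 → ℂ)) = (fun _ : 𝔼 => (0:ℂ)) from rfl, fderiv_fun_const]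
      simp
    rw [h0]
    exact Submodule.zero_mem _
  · rintro f g _ _ ⟨hfd, hfn⟩ ⟨hgd, hgn⟩
    refine ⟨hfd.add hgd, fun j => ?_⟩
    have h0 : pderivCoord j (f + g) = pderivCoord j f + pderivCoord j g := by
      funext x
      rw [pderivCoord, show (f + g) = (fun y => f y + g y) from rfl,
        fderiv_fun_add (hfd x) (hgd x)]
      simp [pderivCoord]
    rw [h0]
    exact Submodule.add_mem _ (hfn j) (hgn j)
  · rintro a f _ ⟨hfd, hfn⟩
    refine ⟨hfd.const_smul a, fun j => ?_⟩
    have h0 : pderivCoord j (a • f) = a • pderivCoord j f := by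
      funext x
      rw [pderivCoord, show (a • f) = (fun y => a • f y) from rfl,
        fderiv_fun_const_smul (hfd x) a]
      simp [pderivCoord]
    rw [h0]
    exact Submodule.smul_mem _ _ (hfn j)

end Deriv

noncomputable section Main

open scoped FourierTransform
open Complex MeasureTheory

variable {n : ℕ}

local notation "𝔼" => EuclideanSpace ℝ (Fin n)

lemma norm_FT_kernel (t : ℝ) : ‖Complex.exp (-2 * (Real.pi : ℂ) * Complex.I * (t : ℂ))‖ = 1 := by
  rw [Complex.norm_exp]
  convert Real.exp_zero using 2
  simp

lemma continuous_FT_kernel (ξ : 𝔼) :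
    Continuous fun x : 𝔼 => Complex.exp (-2 * (Real.pi : ℂ) * Complex.I * ((⟪x, ξ⟫ : ℝ) : ℂ)) :=
  Complex.continuous_exp.comp (continuous_const.mul
    (Complex.continuous_ofReal.comp (continuous_id.inner continuous_const)))

lemma FT_integrand_integrable {g : 𝔼 → ℂ} (hg : Integrable g) (ξ : 𝔼) :
    Integrable (fun x : 𝔼 =>
      g x * Complex.exp (-2 * (Real.pi : ℂ) * Complex.I * ((⟪x, ξ⟫ : ℝ) : ℂ))) := by
  have h := hg.bdd_mul (continuous_FT_kernel ξ).aestronglyMeasurable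
    (c := 1) (Filter.Eventually.of_forall fun x => le_of_eq (norm_FT_kernel _))
  exact h.congr (Filter.Eventually.of_forall fun x => mul_comm _ _)

lemma FT_mul_coord {f : 𝔼 → ℂ} (hf : Integrable f)
    (hf' : Integrable fun v : 𝔼 => ‖v‖ * ‖f v‖) (j : Fin n) :
    FT (fun v => (v j : ℂ) * f v)
      = (-(2 * (Real.pi : ℂ) * Complex.I))⁻¹ • pderivCoord j (FT f) := by
  have hFT : FT f = 𝓕 f := funext (FT_eq f)
  have hint : Integrable (fun v : 𝔼 => VectorFourier.fourierSMulRight (innerSL ℝ) f v) := by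
    refine ((hf'.const_mul (2 * Real.pi)).mono'
      (hf.aestronglyMeasurable.fourierSMulRight) ?_)
    refine Filter.Eventually.of_forall fun v => ?_
    rw [VectorFourier.norm_fourierSMulRight, innerSL_apply_norm]
    exact le_of_eq (by ring)
  funext ξ
  have hder := (Real.hasFDerivAt_fourier hf hf' ξ).fderiv
  have happ : fderiv ℝ (𝓕 f) ξ (EuclideanSpace.single j 1)
      = 𝓕 (fun v => VectorFourier.fourierSMulRight (innerSL ℝ) f v
          (EuclideanSpace.single j 1)) ξ := by
    rw [hder]
    exact Real.fourier_continuousLinearMap_apply hint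
  have hptw : (fun v : 𝔼 => VectorFourier.fourierSMulRight (innerSL ℝ) f v
        (EuclideanSpace.single j 1))
      = fun v => (-(2 * (Real.pi : ℂ) * Complex.I)) * ((v j : ℂ) * f v) := by
    funext v
    rw [VectorFourier.fourierSMulRight_apply, innerSL_apply_apply,
      EuclideanSpace.inner_single_right]
    simp only [conj_trivial, one_mul, smul_eq_mul, Complex.real_smul]
    try push_cast
    try ring
  have hpull : 𝓕 (fun v : 𝔼 => (-(2 * (Real.pi : ℂ) * Complex.I)) * ((v j : ℂ) * f v)) ξ
      = (-(2 * (Real.pi : ℂ) * Complex.I)) * 𝓕 (fun v : 𝔼 => (v j : ℂ) * f v) ξ := by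
    rw [Real.fourier_eq', Real.fourier_eq']
    simp only [smul_eq_mul]
    rw [← integral_const_mul]
    congr 1
    funext v
    ring
  have hne : (-(2 * (Real.pi : ℂ) * Complex.I)) ≠ 0 := by
    simp [Real.pi_ne_zero, Complex.I_ne_zero]
  calc FT (fun v => (v j : ℂ) * f v) ξ
      = 𝓕 (fun v : 𝔼 => (v j : ℂ) * f v) ξ := FT_eq _ _
    _ = (-(2 * (Real.pi : ℂ) * Complex.I))⁻¹ *
        ((-(2 * (Real.pi : ℂ) * Complex.I)) * 𝓕 (fun v : 𝔼 => (v j : ℂ) * f v) ξ) := by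
        rw [← mul_assoc, inv_mul_cancel₀ hne, one_mul]
    _ = (-(2 * (Real.pi : ℂ) * Complex.I))⁻¹ *
        𝓕 (fun v : 𝔼 => (-(2 * (Real.pi : ℂ) * Complex.I)) * ((v j : ℂ) * f v)) ξ := by
        rw [hpull]
    _ = (-(2 * (Real.pi : ℂ) * Complex.I))⁻¹ * fderiv ℝ (𝓕 f) ξ (EuclideanSpace.single j 1) := by
        rw [happ, hptw]
    _ = ((-(2 * (Real.pi : ℂ) * Complex.I))⁻¹ • pderivCoord j (FT f)) ξ := by
        rw [Pi.smul_apply, smul_eq_mul, pderivCoord, hFT]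

theorem isNice_FT_buildingBlock {A : 𝔼 →ₗ[ℝ] 𝔼} (hA : IsPosDefSymm A) (α : Fin n → ℕ)
    (b : Fin n → ℂ) : IsNice (FT (buildingBlock α A b)) := by
  classical
  suffices H : ∀ m : ℕ, ∀ α : Fin n → ℕ, (∑ j, α j) = m →
      IsNice (FT (buildingBlock α A b)) from H _ α rfl
  intro m
  induction m with
  | zero =>
    intro α hα
    have : α = fun _ => 0 := by
      funext j
      exact (Finset.sum_eq_zero_iff.mp hα) j (Finset.mem_univ j)
    rw [this]
    exact isNice_FT_buildingBlock_zero hA b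
  | succ m ih =>
    intro α hα
    have hex : ∃ j, α j ≠ 0 := by
      by_contra h
      push_neg at h
      rw [Finset.sum_eq_zero (fun j _ => h j)] at hα
      simp at hα
    obtain ⟨j, hj⟩ := hex
    set α' := Function.update α j (α j - 1) with hα'
    have hsum' : (∑ k, α' k) = m := by
      rw [hα', Finset.sum_update_of_mem (Finset.mem_univ j)]
      have h2 := Finset.add_sum_erase Finset.univ α (Finset.mem_univ j)
      have h3 : Finset.univ \ {j} = Finset.univ.erase j := by
        rw [Finset.erase_eq]
      rw [h3]
      omega
    have hblock : buildingBlock α A b = fun x => (x j : ℂ) * buildingBlock α' A b x := by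
      funext x
      rw [buildingBlock, buildingBlock]
      have hp : (∏ i, (x i : ℂ)^(α i)) = (x j : ℂ) * ∏ i, (x i : ℂ)^(α' i) := by
        rw [← Finset.mul_prod_erase Finset.univ (fun i => (x i : ℂ)^(α i)) (Finset.mem_univ j),
          ← Finset.mul_prod_erase Finset.univ (fun i => (x i : ℂ)^(α' i)) (Finset.mem_univ j)]
        have h4 : (∏ i ∈ Finset.univ.erase j, (x i : ℂ)^(α' i))
            = ∏ i ∈ Finset.univ.erase j, (x i : ℂ)^(α i) :=
          Finset.prod_congr rfl fun i hi => by
            rw [hα', Function.update_of_ne (Finset.ne_of_mem_erase hi)]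
        rw [h4, hα', Function.update_self]
        have h5 : (x j : ℂ) ^ (α j) = (x j : ℂ) * (x j : ℂ) ^ (α j - 1) := by
          conv_lhs => rw [show α j = (α j - 1) + 1 by omega]
          rw [pow_succ]
          ring
        rw [h5]
        ring
      rw [hp]
      ring
    have h1 : Integrable (buildingBlock α' A b) := integrable_buildingBlock hA
    have h2 : Integrable fun v : 𝔼 => ‖v‖ * ‖buildingBlock α' A b v‖ :=
      integrable_mul_buildingBlock hA
    have h3 := FT_mul_coord h1 h2 j
    rw [hblock, h3]
    exact Submodule.smul_mem _ _ ((isNice_pderiv (ih α' hsum')).2 j)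

end Main

/-- The Fourier transform of a nice function is nice. -/
theorem isNice_fourier_transform (n : ℕ)
    (f : EuclideanSpace ℝ (Fin n) → ℂ) (hf : IsNice f) :
    IsNice (FT f) := by
  suffices h : Integrable f ∧ IsNice (FT f) from h.2
  refine Submodule.span_induction (p := fun g _ => Integrable g ∧ IsNice (FT g))
    ?_ ?_ ?_ ?_ hf
  · rintro g ⟨α, A, b, hA, rfl⟩
    exact ⟨integrable_buildingBlock hA, isNice_FT_buildingBlock hA α b⟩
  · refine ⟨integrable_zero _ _ _, ?_⟩
    have h0 : FT (n := n) (0 : EuclideanSpace ℝ (Fin n) → ℂ) = 0 := by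
      funext ξ
      rw [FT]
      simp
    rw [h0]
    exact Submodule.zero_mem _
  · rintro g h _ _ ⟨hgi, hgn⟩ ⟨hhi, hhn⟩
    refine ⟨hgi.add hhi, ?_⟩
    have hadd : FT (g + h) = FT g + FT h := by
      funext ξ
      rw [Pi.add_apply, FT, FT, FT, ← integral_add (FT_integrand_integrable hgi ξ)
        (FT_integrand_integrable hhi ξ)]
      congr 1
      funext x
      rw [Pi.add_apply]
      ring
    rw [hadd]
    exact Submodule.add_mem _ hgn hhn
  · rintro a g _ ⟨hgi, hgn⟩
    refine ⟨hgi.smul a, ?_⟩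
    have hsmul : FT (a • g) = a • FT g := by
      funext ξ
      rw [Pi.smul_apply, smul_eq_mul, FT, FT, ← integral_const_mul]
      congr 1
      funext x
      rw [Pi.smul_apply, smul_eq_mul]
      ring
    rw [hsmul]
    exact Submodule.smul_mem _ _ hgn
end

section
/- Fourier inversion for nice functions: if f : ℝⁿ → ℂ is a nice function, then for every x ∈ ℝⁿ, f(x) = ∫_{ℝⁿ} f̂(ξ) exp(2πi ξ·x) dξ; that is, the inverse transform of the Fourier transform of f recovers f. -/
open MeasureTheory Real
open scoped RealInnerProductSpace

section AuxProofs
open Complex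
open scoped SchwartzMap FourierTransform ContDiff

lemma fderiv_cexp_real : fderiv ℝ Complex.exp = fun z => (ContinuousLinearMap.mul ℝ ℂ) (Complex.exp z) := by
  funext z
  have h : HasFDerivAt Complex.exp ((ContinuousLinearMap.mul ℝ ℂ) (Complex.exp z)) z := by
    have h1 := (Complex.hasDerivAt_exp z).hasFDerivAt.restrictScalars ℝ
    refine h1.congr_fderiv ?_
    ext v
    simp [mul_comm]
  exact h.fderiv

lemma contDiff_cexp_real {N : WithTop ℕ∞} : ContDiff ℝ N Complex.exp :=
  (Complex.contDiff_exp (𝕜 := ℂ)).restrict_scalars ℝ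

lemma norm_iteratedFDeriv_cexp_le (m : ℕ) (z : ℂ) :
    ‖iteratedFDeriv ℝ m Complex.exp z‖ ≤ ‖Complex.exp z‖ := by
  induction m generalizing z with
  | zero => simp [norm_iteratedFDeriv_zero]
  | succ m ih =>
    rw [← norm_iteratedFDeriv_fderiv, fderiv_cexp_real]
    rw [show (fun z => (ContinuousLinearMap.mul ℝ ℂ) (Complex.exp z))
        = (ContinuousLinearMap.mul ℝ ℂ) ∘ Complex.exp from rfl]
    rw [ContinuousLinearMap.iteratedFDeriv_comp_left _ (x := z) contDiff_cexp_real.contDiffAt (le_top)]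
    calc ‖(ContinuousLinearMap.mul ℝ ℂ).compContinuousMultilinearMap (iteratedFDeriv ℝ m Complex.exp z)‖
        ≤ ‖ContinuousLinearMap.mul ℝ ℂ‖ * ‖iteratedFDeriv ℝ m Complex.exp z‖ :=
          ContinuousLinearMap.norm_compContinuousMultilinearMap_le _ _
      _ ≤ 1 * ‖Complex.exp z‖ := by
          apply mul_le_mul (ContinuousLinearMap.opNorm_mul_le ℝ ℂ) (ih z) (norm_nonneg _) zero_le_one
      _ = ‖Complex.exp z‖ := one_mul _

variable {E F : Type*} [NormedAddCommGroup E] [NormedSpace ℝ E] [NormedAddCommGroup F] [NormedSpace ℝ F]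

lemma norm_iteratedFDeriv_const_le (c : F) (j : ℕ) (x : E) :
    ‖iteratedFDeriv ℝ j (fun _ : E => c) x‖ ≤ ‖c‖ := by
  cases j with
  | zero => simp
  | succ j => simp [iteratedFDeriv_const_of_ne (Nat.succ_ne_zero j)]

lemma norm_iteratedFDeriv_clm_le (g : E →L[ℝ] F) (i : ℕ) (x : E) :
    ‖iteratedFDeriv ℝ i (⇑g) x‖ ≤ ‖g‖ * (1 + ‖x‖) := by
  have hg0 : (0:ℝ) ≤ ‖g‖ := norm_nonneg g
  have hx0 : (0:ℝ) ≤ ‖x‖ := norm_nonneg x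
  match i with
  | 0 =>
    rw [norm_iteratedFDeriv_zero]
    calc ‖g x‖ ≤ ‖g‖ * ‖x‖ := g.le_opNorm x
      _ ≤ ‖g‖ * (1 + ‖x‖) := by nlinarith
  | 1 =>
    rw [← norm_iteratedFDeriv_fderiv, norm_iteratedFDeriv_zero]
    rw [g.fderiv]
    nlinarith
  | (i+2) =>
    rw [← norm_iteratedFDeriv_fderiv]
    have : fderiv ℝ (⇑g) = fun _ : E => g := by funext y; exact g.fderiv
    rw [this, iteratedFDeriv_const_of_ne (Nat.succ_ne_zero i)]
    simp only [Pi.zero_apply, norm_zero]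
    positivity

lemma clm_hasTemperateGrowth (g : E →L[ℝ] F) : Function.HasTemperateGrowth ⇑g :=
  ⟨g.contDiff, fun i => ⟨1, ‖g‖, fun x => by simpa using norm_iteratedFDeriv_clm_le g i x⟩⟩

lemma Function.HasTemperateGrowth.mul' {f g : E → ℂ} (hf : Function.HasTemperateGrowth f)
    (hg : Function.HasTemperateGrowth g) : Function.HasTemperateGrowth (fun x => f x * g x) := by
  refine ⟨hf.1.mul hg.1, fun m => ?_⟩
  obtain ⟨k₁, C₁, hC₁0, h₁⟩ := hf.norm_iteratedFDeriv_le_uniform m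
  obtain ⟨k₂, C₂, hC₂0, h₂⟩ := hg.norm_iteratedFDeriv_le_uniform m
  refine ⟨k₁ + k₂, 2^m * (C₁*C₂), fun x => ?_⟩
  have h1x : (0:ℝ) ≤ 1 + ‖x‖ := by positivity
  calc ‖iteratedFDeriv ℝ m (fun x => f x * g x) x‖
      ≤ ∑ i ∈ Finset.range (m+1), (m.choose i : ℝ) * ‖iteratedFDeriv ℝ i f x‖
          * ‖iteratedFDeriv ℝ (m-i) g x‖ :=
        norm_iteratedFDeriv_mul_le hf.1 hg.1 x (mod_cast le_top)
    _ ≤ ∑ i ∈ Finset.range (m+1), (m.choose i : ℝ) * ((C₁*C₂) * (1+‖x‖)^(k₁+k₂)) := by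
        refine Finset.sum_le_sum fun i hi => ?_
        rw [Finset.mem_range, Nat.lt_succ_iff] at hi
        have e1 := h₁ i hi x
        have e2 := h₂ (m-i) (Nat.sub_le m i) x
        have : ‖iteratedFDeriv ℝ i f x‖ * ‖iteratedFDeriv ℝ (m-i) g x‖
            ≤ (C₁*C₂) * (1+‖x‖)^(k₁+k₂) := by
          calc ‖iteratedFDeriv ℝ i f x‖ * ‖iteratedFDeriv ℝ (m-i) g x‖
              ≤ (C₁ * (1+‖x‖)^k₁) * (C₂ * (1+‖x‖)^k₂) := by
                apply mul_le_mul e1 e2 (norm_nonneg _) (by positivity)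
            _ = (C₁*C₂) * (1+‖x‖)^(k₁+k₂) := by rw [pow_add]; ring
        calc (m.choose i : ℝ) * ‖iteratedFDeriv ℝ i f x‖ * ‖iteratedFDeriv ℝ (m-i) g x‖
            = (m.choose i : ℝ) * (‖iteratedFDeriv ℝ i f x‖ * ‖iteratedFDeriv ℝ (m-i) g x‖) := by ring
          _ ≤ (m.choose i : ℝ) * ((C₁*C₂) * (1+‖x‖)^(k₁+k₂)) := by
              apply mul_le_mul_of_nonneg_left this (by positivity)
    _ = (∑ i ∈ Finset.range (m+1), (m.choose i : ℝ)) * ((C₁*C₂) * (1+‖x‖)^(k₁+k₂)) := by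
        rw [← Finset.sum_mul]
    _ = 2^m * (C₁*C₂) * (1+‖x‖)^(k₁+k₂) := by
        have : (∑ i ∈ Finset.range (m+1), (m.choose i : ℝ)) = 2^m := by
          exact_mod_cast congrArg (Nat.cast : ℕ → ℝ) (Nat.sum_range_choose m)
        rw [this]; ring

lemma temperate_finset_prod {ι : Type*} (s : Finset ι) (g : ι → E → ℂ)
    (hg : ∀ j, Function.HasTemperateGrowth (g j)) :
    Function.HasTemperateGrowth (fun x => ∏ j ∈ s, g j x) := by
  classical
  induction s using Finset.induction with
  | empty => simpa using Function.HasTemperateGrowth.const (1:ℂ)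
  | insert j s hj ih =>
    simp only [Finset.prod_insert hj]
    exact (hg _).mul' ih

lemma temperate_pow (f : E → ℂ) (hf : Function.HasTemperateGrowth f) (k : ℕ) :
    Function.HasTemperateGrowth (fun x => f x ^ k) := by
  induction k with
  | zero => simpa using Function.HasTemperateGrowth.const (1:ℂ)
  | succ k ih =>
    have := hf.mul' ih
    simpa [pow_succ, mul_comm] using this


lemma posdef_lower {n : ℕ} (A : EuclideanSpace ℝ (Fin n) →ₗ[ℝ] EuclideanSpace ℝ (Fin n))
    (hA : IsPosDefSymm A) :
    ∃ c : ℝ, 0 < c ∧ ∀ x, c * ‖x‖^2 ≤ ⟪A x, x⟫ := by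
  have hcont : Continuous (fun x : EuclideanSpace ℝ (Fin n) => ⟪A x, x⟫) := by
    exact (LinearMap.continuous_of_finiteDimensional A).inner continuous_id
  by_cases hs : (Metric.sphere (0 : EuclideanSpace ℝ (Fin n)) 1).Nonempty
  · obtain ⟨x₀, hx₀mem, hmin⟩ := (isCompact_sphere (0 : EuclideanSpace ℝ (Fin n)) 1).exists_isMinOn
      hs hcont.continuousOn
    have hx₀ : ‖x₀‖ = 1 := by simpa using hx₀mem
    have hx₀ne : x₀ ≠ 0 := by intro h; rw [h] at hx₀; simp at hx₀
    refine ⟨⟪A x₀, x₀⟫, hA.2 x₀ hx₀ne, fun x => ?_⟩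
    rcases eq_or_ne x 0 with rfl | hx
    · simp
    · have hxn : (0:ℝ) < ‖x‖ := norm_pos_iff.2 hx
      set u : EuclideanSpace ℝ (Fin n) := ‖x‖⁻¹ • x with hu
      have hun : ‖u‖ = 1 := by
        rw [hu, norm_smul]; simp [abs_of_pos (inv_pos.2 hxn), inv_mul_cancel₀ hxn.ne']
      have h1 : ⟪A x₀, x₀⟫ ≤ ⟪A u, u⟫ := hmin (by simpa using hun)
      have h2 : ⟪A u, u⟫ = ‖x‖⁻¹ * ‖x‖⁻¹ * ⟪A x, x⟫ := by
        rw [hu, LinearMap.map_smul, real_inner_smul_left, real_inner_smul_right]; ring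
      rw [h2] at h1
      have h3 : ‖x‖^2 * (‖x‖⁻¹ * ‖x‖⁻¹ * ⟪A x, x⟫) = ⟪A x, x⟫ := by
        field_simp
      nlinarith [mul_le_mul_of_nonneg_left h1 (le_of_lt (by positivity : (0:ℝ) < ‖x‖^2))]
  · refine ⟨1, one_pos, fun x => ?_⟩
    have : x = 0 := by
      by_contra h
      exact hs ⟨‖x‖⁻¹ • x, by
        simp only [Metric.mem_sphere, dist_zero_right, norm_smul]
        have hxn : (0:ℝ) < ‖x‖ := norm_pos_iff.2 h
        simp [abs_of_pos (inv_pos.2 hxn), inv_mul_cancel₀ hxn.ne']⟩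
    simp [this]

lemma aux_real (k m : ℕ) (a b c d s : ℝ) (hc : 0 < c) (ha : 1 ≤ a) (hb : 0 ≤ b)
    (hd : 0 ≤ d) (hs : 0 ≤ s) :
    s^k * (a + b*s)^m * Real.exp (d*s - c*s^2)
      ≤ (a+b)^m * Real.exp ((((k:ℝ)+(m:ℝ)+d))^2/(4*c)) := by
  set e : ℝ := (k:ℝ)+(m:ℝ)+d with he
  have h1 : s^k * (a + b*s)^m ≤ (a+b)^m * (1+s)^(k+m) := by
    calc s^k * (a + b*s)^m ≤ (1+s)^k * ((a+b)*(1+s))^m := by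
          apply mul_le_mul (pow_le_pow_left₀ hs (by linarith) k)
            (pow_le_pow_left₀ (by positivity) (by nlinarith) m) (by positivity) (by positivity)
      _ = (a+b)^m * (1+s)^(k+m) := by rw [mul_pow, pow_add]; ring
  have h2 : (1+s)^(k+m) ≤ Real.exp (((k:ℝ)+(m:ℝ))*s) := by
    calc (1+s)^(k+m) ≤ (Real.exp s)^(k+m) :=
          pow_le_pow_left₀ (by positivity) (by linarith [Real.add_one_le_exp s]) _
      _ = Real.exp (((k+m : ℕ) : ℝ)*s) := (Real.exp_nat_mul s (k+m)).symm
      _ = Real.exp (((k:ℝ)+(m:ℝ))*s) := by push_cast; ring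
  have h3 : Real.exp (((k:ℝ)+(m:ℝ))*s) * Real.exp (d*s - c*s^2) ≤ Real.exp (e^2/(4*c)) := by
    rw [← Real.exp_add]
    apply Real.exp_le_exp.2
    rw [he, le_div_iff₀ (by linarith : (0:ℝ) < 4*c)]
    nlinarith [sq_nonneg (2*c*s - ((k:ℝ)+(m:ℝ)+d))]
  calc s^k * (a + b*s)^m * Real.exp (d*s - c*s^2)
      ≤ ((a+b)^m * (1+s)^(k+m)) * Real.exp (d*s - c*s^2) := by
        apply mul_le_mul_of_nonneg_right h1 (Real.exp_nonneg _)
    _ ≤ (a+b)^m * (Real.exp (((k:ℝ)+(m:ℝ))*s) * Real.exp (d*s - c*s^2)) := by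
        rw [mul_assoc]
        apply mul_le_mul_of_nonneg_left
          (mul_le_mul_of_nonneg_right h2 (Real.exp_nonneg _)) (by positivity)
    _ ≤ (a+b)^m * Real.exp (e^2/(4*c)) := by
        apply mul_le_mul_of_nonneg_left h3 (by positivity)

section Core
variable {n : ℕ}

set_option maxHeartbeats 2000000 in
lemma expQ_schwartz (A : EuclideanSpace ℝ (Fin n) →ₗ[ℝ] EuclideanSpace ℝ (Fin n))
    (b : Fin n → ℂ) (hA : IsPosDefSymm A) :
    ∃ g : SchwartzMap (EuclideanSpace ℝ (Fin n)) ℂ,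
      ⇑g = fun x => Complex.exp (-(((⟪A x, x⟫ : ℝ)) : ℂ) + ∑ j, b j * (x j : ℂ)) := by
  obtain ⟨c, hc, hcle⟩ := posdef_lower A hA
  set A' : EuclideanSpace ℝ (Fin n) →L[ℝ] EuclideanSpace ℝ (Fin n) :=
    LinearMap.toContinuousLinearMap A with hA'
  set L : EuclideanSpace ℝ (Fin n) →L[ℝ] ℂ :=
    ∑ j, b j • (Complex.ofRealCLM.comp (EuclideanSpace.proj j)) with hL
  have hLapp : ∀ x, L x = ∑ j, b j * (x j : ℂ) := by
    intro x
    rw [hL]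
    simp [ContinuousLinearMap.sum_apply]
  set Rr : EuclideanSpace ℝ (Fin n) →L[ℝ] EuclideanSpace ℝ (Fin n) →L[ℝ] ℝ :=
    (-2 : ℝ) • ((innerSL ℝ).comp A') with hRr
  set R : EuclideanSpace ℝ (Fin n) →L[ℝ] EuclideanSpace ℝ (Fin n) →L[ℝ] ℂ :=
    (ContinuousLinearMap.compL ℝ (EuclideanSpace ℝ (Fin n)) ℝ ℂ Complex.ofRealCLM).comp Rr
    with hR
  have hRapp : ∀ x v, R x v = ((-2 * ⟪A x, v⟫ : ℝ) : ℂ) := by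
    intro x v
    rw [hR, hRr]
    simp [hA']
  set Q : EuclideanSpace ℝ (Fin n) → ℂ :=
    fun x => ((-(⟪A x, x⟫) : ℝ) : ℂ) + L x with hQdef
  -- smoothness
  have hq : ContDiff ℝ ∞ (fun x : EuclideanSpace ℝ (Fin n) => ⟪A x, x⟫) := by
    exact ContDiff.inner ℝ (A'.contDiff) contDiff_id
  have hQ : ContDiff ℝ ∞ Q :=
    (Complex.ofRealCLM.contDiff.comp hq.neg).add L.contDiff
  -- derivative of Q
  have fderivQ : ∀ x, HasFDerivAt Q (R x + L) x := by
    intro x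
    have hA'd : HasFDerivAt (fun y : EuclideanSpace ℝ (Fin n) => A y) A' x := A'.hasFDerivAt
    have hid : HasFDerivAt (fun y : EuclideanSpace ℝ (Fin n) => y)
      (ContinuousLinearMap.id ℝ (EuclideanSpace ℝ (Fin n))) x := hasFDerivAt_id x
    have hinner := hA'd.inner ℝ hid
    have h1 := (Complex.ofRealCLM.hasFDerivAt.comp x hinner.neg).add L.hasFDerivAt
    refine HasFDerivAt.congr_fderiv (f := Q) h1 ?_
    ext v
    have hsym : ⟪A v, x⟫ = ⟪A x, v⟫ := by rw [hA.1 v x, real_inner_comm]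
    simp only [ContinuousLinearMap.add_apply, ContinuousLinearMap.comp_apply,
      ContinuousLinearMap.neg_apply, fderivInnerCLM_apply, ContinuousLinearMap.prod_apply,
      ContinuousLinearMap.coe_id', id_eq, hRapp, Complex.ofRealCLM_apply, hA',
      LinearMap.coe_toContinuousLinearMap']
    rw [hsym]
    push_cast
    ring
  have fderivQeq : fderiv ℝ Q = fun x => R x + L := funext fun x => (fderivQ x).fderiv
  clear_value A' L Rr R Q
  -- derivative bounds for Q
  have hQbound : ∀ (i : ℕ), 1 ≤ i → ∀ (x : EuclideanSpace ℝ (Fin n)),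
      ‖iteratedFDeriv ℝ i Q x‖ ≤ ‖R‖ * (1 + ‖x‖) + ‖L‖ := by
    rintro (_|j) hi x
    · omega
    rw [← norm_iteratedFDeriv_fderiv, fderivQeq]
    have : (fun x => R x + L) = (⇑R + fun _ : EuclideanSpace ℝ (Fin n) => L) := rfl
    rw [this, iteratedFDeriv_add_apply R.contDiff.contDiffAt contDiff_const.contDiffAt]
    refine (norm_add_le _ _).trans (add_le_add ?_ ?_)
    · exact norm_iteratedFDeriv_clm_le R j x
    · exact norm_iteratedFDeriv_const_le L j x
  -- assemble decay
  set a : ℝ := 1 + ‖L‖ + ‖R‖ with ha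
  have ha1 : 1 ≤ a := by have := norm_nonneg L; have := norm_nonneg R; simp [ha]; linarith
  clear_value a
  have hrea : ∀ x : EuclideanSpace ℝ (Fin n), (Q x).re ≤ ‖L‖ * ‖x‖ - c * ‖x‖^2 := by
    intro x
    have h1 : (Q x).re = -(⟪A x, x⟫) + (L x).re := by simp [hQdef]
    have h2 : (L x).re ≤ ‖L x‖ := Complex.re_le_norm (L x)
    have h3 : ‖L x‖ ≤ ‖L‖ * ‖x‖ := L.le_opNorm x
    have h4 := hcle x
    linarith
  have main : ∀ (m : ℕ) (x : EuclideanSpace ℝ (Fin n)),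
      ‖iteratedFDeriv ℝ m (Complex.exp ∘ Q) x‖
        ≤ (m.factorial : ℝ) * Real.exp ((Q x).re) * (a + ‖R‖ * ‖x‖)^m := by
    intro m x
    have hDx1 : 1 ≤ a + ‖R‖ * ‖x‖ := by
      have : (0:ℝ) ≤ ‖R‖ * ‖x‖ := by positivity
      linarith
    have hC : ∀ i, i ≤ m → ‖iteratedFDeriv ℝ i Complex.exp (Q x)‖ ≤ Real.exp ((Q x).re) := by
      intro i _
      calc ‖iteratedFDeriv ℝ i Complex.exp (Q x)‖ ≤ ‖Complex.exp (Q x)‖ :=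
            norm_iteratedFDeriv_cexp_le i (Q x)
        _ = Real.exp ((Q x).re) := by rw [Complex.norm_exp]
    have hD : ∀ i, 1 ≤ i → i ≤ m → ‖iteratedFDeriv ℝ i Q x‖ ≤ (a + ‖R‖ * ‖x‖) ^ i := by
      intro i hi1 _
      calc ‖iteratedFDeriv ℝ i Q x‖
          ≤ ‖R‖ * (1 + ‖x‖) + ‖L‖ := hQbound i hi1 x
        _ ≤ a + ‖R‖ * ‖x‖ := by rw [ha]; nlinarith [norm_nonneg R, norm_nonneg L, norm_nonneg x]
        _ ≤ (a + ‖R‖ * ‖x‖)^i := le_self_pow₀ hDx1 (by omega)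
    exact norm_iteratedFDeriv_comp_le (𝕜 := ℝ) (N := ∞) contDiff_cexp_real hQ
      (by exact_mod_cast le_top) x hC hD
  refine ⟨⟨Complex.exp ∘ Q, contDiff_cexp_real.comp hQ, ?_⟩, ?_⟩
  · intro k m
    refine ⟨(m.factorial : ℝ) * ((a + ‖R‖) ^ m *
      Real.exp ((((k:ℝ)+(m:ℝ)+‖L‖))^2/(4*c))), fun x => ?_⟩
    have hs : (0:ℝ) ≤ ‖x‖ := norm_nonneg x
    have step1 : ‖x‖^k * ‖iteratedFDeriv ℝ m (Complex.exp ∘ Q) x‖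
        ≤ (m.factorial : ℝ) * (‖x‖^k * (a + ‖R‖ * ‖x‖)^m * Real.exp (‖L‖ * ‖x‖ - c * ‖x‖^2)) := by
      have h1 := main m x
      have h2 : Real.exp ((Q x).re) ≤ Real.exp (‖L‖ * ‖x‖ - c * ‖x‖^2) :=
        Real.exp_le_exp.2 (hrea x)
      have hx : (0:ℝ) ≤ ‖x‖^k := by positivity
      calc ‖x‖^k * ‖iteratedFDeriv ℝ m (Complex.exp ∘ Q) x‖
          ≤ ‖x‖^k * ((m.factorial : ℝ) * Real.exp ((Q x).re) * (a + ‖R‖ * ‖x‖)^m) :=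
            mul_le_mul_of_nonneg_left h1 hx
        _ ≤ ‖x‖^k * ((m.factorial : ℝ) * Real.exp (‖L‖ * ‖x‖ - c * ‖x‖^2) * (a + ‖R‖ * ‖x‖)^m) := by
            apply mul_le_mul_of_nonneg_left _ hx
            apply mul_le_mul_of_nonneg_right (mul_le_mul_of_nonneg_left h2 (by positivity))
              (by positivity)
        _ = (m.factorial : ℝ) * (‖x‖^k * (a + ‖R‖ * ‖x‖)^m * Real.exp (‖L‖ * ‖x‖ - c * ‖x‖^2)) := by
            ring
    refine step1.trans ?_
    apply mul_le_mul_of_nonneg_left _ (by positivity)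
    exact aux_real k m a ‖R‖ c ‖L‖ ‖x‖ hc ha1 (norm_nonneg R) (norm_nonneg L) hs
  · funext x
    show Complex.exp (Q x) = _
    rw [hQdef]
    simp only [hLapp]
    push_cast
    ring_nf
end Core

lemma buildingBlock_schwartz {n : ℕ} (α : Fin n → ℕ)
    (A : EuclideanSpace ℝ (Fin n) →ₗ[ℝ] EuclideanSpace ℝ (Fin n)) (b : Fin n → ℂ)
    (hA : IsPosDefSymm A) :
    ∃ g : SchwartzMap (EuclideanSpace ℝ (Fin n)) ℂ, ⇑g = buildingBlock α A b := by
  obtain ⟨g₀, hg₀⟩ := expQ_schwartz A b hA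
  have hP : Function.HasTemperateGrowth
      (fun x : EuclideanSpace ℝ (Fin n) => ∏ j, (x j : ℂ) ^ α j) := by
    apply temperate_finset_prod
    intro j
    exact temperate_pow _
      (clm_hasTemperateGrowth (Complex.ofRealCLM.comp (EuclideanSpace.proj j))) (α j)
  refine ⟨SchwartzMap.bilinLeftCLM (ContinuousLinearMap.mul ℝ ℂ) hP g₀, ?_⟩
  funext x
  have h1 : (SchwartzMap.bilinLeftCLM (ContinuousLinearMap.mul ℝ ℂ) hP g₀) x
      = g₀ x * (∏ j, (x j : ℂ) ^ α j) := rfl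
  rw [h1, congrFun hg₀ x]
  unfold buildingBlock
  ring

lemma isNice_schwartz {n : ℕ} (f : EuclideanSpace ℝ (Fin n) → ℂ) (hf : IsNice f) :
    ∃ g : SchwartzMap (EuclideanSpace ℝ (Fin n)) ℂ, ⇑g = f := by
  unfold IsNice at hf
  induction hf using Submodule.span_induction with
  | mem g hg =>
    obtain ⟨α, A, b, hA, rfl⟩ := hg
    exact buildingBlock_schwartz α A b hA
  | zero => exact ⟨0, by ext x; simp⟩
  | add f₁ f₂ h₁ h₂ ih₁ ih₂ =>
    obtain ⟨g₁, rfl⟩ := ih₁; obtain ⟨g₂, rfl⟩ := ih₂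
    exact ⟨g₁ + g₂, by ext x; simp⟩
  | smul c f₁ h₁ ih₁ =>
    obtain ⟨g₁, rfl⟩ := ih₁
    exact ⟨c • g₁, by ext x; simp⟩

lemma FT_eq_s13 {n : ℕ} (f : EuclideanSpace ℝ (Fin n) → ℂ) : FT f = 𝓕 f := by
  funext ξ
  rw [FT, Real.fourier_eq']
  apply integral_congr_ae
  filter_upwards with x
  rw [smul_eq_mul, mul_comm]
  congr 1
  push_cast
  ring


end AuxProofs

/-- Fourier inversion for nice functions. -/
theorem fourier_inversion_nice (n : ℕ)
    (f : EuclideanSpace ℝ (Fin n) → ℂ) (hf : IsNice f)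
    (x : EuclideanSpace ℝ (Fin n)) :
    f x = ∫ ξ : EuclideanSpace ℝ (Fin n),
      FT f ξ * Complex.exp (2 * (Real.pi : ℂ) * Complex.I * (⟪ξ, x⟫ : ℂ)) := by
  obtain ⟨g, rfl⟩ := isNice_schwartz f hf
  have h1 : Integrable (⇑g) volume := g.integrable
  have h2 : Integrable (FourierTransform.fourier ⇑g) volume := by
    have := (SchwartzMap.fourierTransformCLM ℝ g).integrable (μ := volume)
    rwa [SchwartzMap.fourierTransformCLM_apply, SchwartzMap.fourier_coe] at this
  have h3 := h1.fourierInv_fourier_eq h2 (g.continuous.continuousAt (x := x))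
  rw [← h3, Real.fourierInv_eq']
  rw [FT_eq_s13]
  apply integral_congr_ae
  filter_upwards with ξ
  rw [smul_eq_mul, mul_comm]
  congr 1
  push_cast
  ring
end

section
/- If f₁ and f₂ are nice functions on ℝⁿ, then their convolution (f₁ * f₂)(x) = ∫_{ℝⁿ} f₁(y) f₂(x − y) dy is again a nice function on ℝⁿ. -/
open MeasureTheory Real
open scoped RealInnerProductSpace

noncomputable section
namespace NiceAux

variable {n : ℕ}

local notation "X" => EuclideanSpace ℝ (Fin n)

lemma coord_le_norm (x : X) (j : Fin n) : |x j| ≤ ‖x‖ := by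
  rw [EuclideanSpace.norm_eq, ← Real.sqrt_sq_eq_abs (x j)]
  apply Real.sqrt_le_sqrt
  have := Finset.single_le_sum (f := fun i => ‖x i‖ ^ 2) (fun i _ => by positivity)
    (Finset.mem_univ j)
  simpa [sq_abs, Real.norm_eq_abs] using this

lemma posdef_nonneg {A : X →ₗ[ℝ] X} (hA : IsPosDefSymm A) (x : X) : 0 ≤ ⟪A x, x⟫ := by
  rcases eq_or_ne x 0 with rfl | hx
  · simp
  · exact (hA.2 x hx).le

lemma exists_eps {A : X →ₗ[ℝ] X} (hA : IsPosDefSymm A) :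
    ∃ ε > 0, ∀ x : X, ε * ‖x‖ ^ 2 ≤ ⟪A x, x⟫ := by
  rcases subsingleton_or_nontrivial X with hsub | hnt
  · exact ⟨1, one_pos, fun x => by
      have : x = 0 := Subsingleton.elim x 0
      simp [this]⟩
  · have hco : Continuous fun x : X => ⟪A x, x⟫ :=
      (A.continuous_of_finiteDimensional).inner continuous_id
    have hsN : (Metric.sphere (0:X) 1).Nonempty := NormedSpace.sphere_nonempty.2 one_pos.le
    obtain ⟨z, hz, hmin'⟩ := (isCompact_sphere (0:X) 1).exists_isMinOn hsN hco.continuousOn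
    have hmin := isMinOn_iff.1 hmin'
    have hz1 : ‖z‖ = 1 := by simpa using mem_sphere_zero_iff_norm.1 hz
    have hz0 : z ≠ 0 := by intro h; rw [h] at hz1; simp at hz1
    refine ⟨⟪A z, z⟫, hA.2 z hz0, fun x => ?_⟩
    rcases eq_or_ne x 0 with rfl | hx
    · simp
    · have hxn : ‖x‖ ≠ 0 := norm_ne_zero_iff.2 hx
      have hmem : (‖x‖⁻¹ • x) ∈ Metric.sphere (0:X) 1 := by
        simp [norm_smul, abs_of_nonneg (norm_nonneg x), inv_mul_cancel₀ hxn]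
      have := hmin _ hmem
      have hexp : ⟪A (‖x‖⁻¹ • x), ‖x‖⁻¹ • x⟫ = (‖x‖⁻¹)^2 * ⟪A x, x⟫ := by
        rw [LinearMap.map_smul, real_inner_smul_left, real_inner_smul_right]; ring
      rw [hexp] at this
      have hpos : (0:ℝ) < ‖x‖^2 := by positivity
      calc ⟪A z, z⟫ * ‖x‖^2 ≤ ((‖x‖⁻¹)^2 * ⟪A x, x⟫) * ‖x‖^2 := by nlinarith
        _ = ⟪A x, x⟫ := by field_simp

lemma integrable_master {ε M : ℝ} (hε : 0 < ε) (K : ℕ) :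
    Integrable (fun z : X => (1+‖z‖)^K * rexp (M*‖z‖ - ε*‖z‖^2)) := by
  have h2 : 0 < ((ε/2 : ℝ) : ℂ).re := by simpa using by positivity
  have base := (GaussianFourier.integrable_cexp_neg_mul_sq_norm_add
    (V := EuclideanSpace ℝ (Fin n)) h2 0 0).norm
  set D : ℝ := ((K:ℝ)+M)^2/(2*ε) with hD
  have base' : Integrable (fun z : X => rexp D * ‖Complex.exp (-((ε/2:ℝ):ℂ) * ‖z‖^2 + 0 * ((⟪(0:X), z⟫ : ℝ):ℂ))‖) :=
    base.const_mul _
  have hcont : Continuous (fun z : X => (1+‖z‖)^K * rexp (M*‖z‖ - ε*‖z‖^2)) := by fun_prop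
  refine base'.mono' hcont.aestronglyMeasurable ?_
  filter_upwards with z
  have ht : (0:ℝ) ≤ ‖z‖ := norm_nonneg z
  have hnorm : ‖Complex.exp (-((ε/2:ℝ):ℂ) * ‖z‖^2 + 0 * ((⟪(0:X), z⟫ : ℝ):ℂ))‖
      = rexp (-(ε/2)*‖z‖^2) := by
    have : (-((ε/2:ℝ):ℂ) * (‖z‖:ℂ)^2 + 0 * ((⟪(0:X), z⟫ : ℝ):ℂ)) = ((-(ε/2)*‖z‖^2 : ℝ) : ℂ) := by
      push_cast; ring
    rw [this, Complex.norm_exp, Complex.ofReal_re]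
  rw [hnorm, Real.norm_eq_abs, abs_of_nonneg (by positivity)]
  calc (1+‖z‖)^K * rexp (M*‖z‖ - ε*‖z‖^2)
      ≤ rexp ((K:ℝ)*‖z‖) * rexp (M*‖z‖ - ε*‖z‖^2) := by
        apply mul_le_mul_of_nonneg_right _ (Real.exp_nonneg _)
        calc (1+‖z‖)^K ≤ (rexp ‖z‖)^K :=
              pow_le_pow_left₀ (by positivity) (by linarith [Real.add_one_le_exp ‖z‖]) K
          _ = rexp ((K:ℝ)*‖z‖) := (Real.exp_nat_mul _ K).symm
    _ = rexp ((K:ℝ)*‖z‖ + (M*‖z‖ - ε*‖z‖^2)) := (Real.exp_add _ _).symm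
    _ ≤ rexp (D + -(ε/2)*‖z‖^2) := by
        apply Real.exp_le_exp.2
        have hD2 : D * (2*ε) = ((K:ℝ)+M)^2 := by rw [hD]; field_simp
        nlinarith [sq_nonneg (ε*‖z‖ - ((K:ℝ)+M)), hε, hD2, sq_nonneg ‖z‖]
    _ = rexp D * rexp (-(ε/2)*‖z‖^2) := Real.exp_add _ _

lemma bb_continuous {α : Fin n → ℕ} {A : X →ₗ[ℝ] X} {b : Fin n → ℂ} :
    Continuous (buildingBlock (n := n) α A b) := by
  unfold buildingBlock
  have hAc : Continuous A := A.continuous_of_finiteDimensional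
  have h1 : Continuous fun x : X => ⟪A x, x⟫ := hAc.inner continuous_id
  have hcoord : ∀ j : Fin n, Continuous fun x : X => x j := fun j => (EuclideanSpace.proj (𝕜 := ℝ) j).continuous
  fun_prop

lemma bb_norm_le {α : Fin n → ℕ} {A : X →ₗ[ℝ] X} {b : Fin n → ℂ} {ε : ℝ}
    (hkey : ∀ x : X, ε * ‖x‖ ^ 2 ≤ ⟪A x, x⟫) (x : X) :
    ‖buildingBlock α A b x‖
      ≤ (1+‖x‖) ^ (∑ j, α j) * rexp ((∑ j, ‖b j‖) * ‖x‖ - ε * ‖x‖ ^ 2) := by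
  unfold buildingBlock
  rw [norm_mul]
  have h1 : ‖∏ j, ((x j : ℝ) : ℂ) ^ α j‖ ≤ (1+‖x‖) ^ (∑ j, α j) := by
    rw [norm_prod, ← Finset.prod_pow_eq_pow_sum]
    refine Finset.prod_le_prod (fun j _ => norm_nonneg _) (fun j _ => ?_)
    rw [norm_pow]
    refine pow_le_pow_left₀ (norm_nonneg _) ?_ _
    rw [Complex.norm_real, Real.norm_eq_abs]
    linarith [coord_le_norm x j, norm_nonneg x]
  have h2 : ‖Complex.exp (-(((⟪A x, x⟫ : ℝ)) : ℂ) + ∑ j, b j * (x j : ℂ))‖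
      ≤ rexp ((∑ j, ‖b j‖) * ‖x‖ - ε * ‖x‖ ^ 2) := by
    rw [Complex.norm_exp]
    apply Real.exp_le_exp.2
    rw [Complex.add_re, Complex.neg_re, Complex.ofReal_re, Complex.re_sum]
    have hsum : ∑ j, (b j * ((x j : ℝ) : ℂ)).re ≤ (∑ j, ‖b j‖) * ‖x‖ := by
      rw [Finset.sum_mul]
      refine Finset.sum_le_sum fun j _ => ?_
      calc (b j * ((x j : ℝ) : ℂ)).re ≤ ‖b j * ((x j : ℝ) : ℂ)‖ :=
            Complex.re_le_norm _
        _ = ‖b j‖ * |x j| := by rw [norm_mul, Complex.norm_real, Real.norm_eq_abs]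
        _ ≤ ‖b j‖ * ‖x‖ := mul_le_mul_of_nonneg_left (coord_le_norm x j) (norm_nonneg _)
    linarith [hkey x]
  calc ‖∏ j, ((x j : ℝ) : ℂ) ^ α j‖ * ‖Complex.exp _‖
      ≤ (1+‖x‖) ^ (∑ j, α j) * rexp ((∑ j, ‖b j‖) * ‖x‖ - ε * ‖x‖ ^ 2) :=
        mul_le_mul h1 h2 (norm_nonneg _) (by positivity)

lemma bb_integrable {α : Fin n → ℕ} {A : X →ₗ[ℝ] X} {b : Fin n → ℂ}
    (hA : IsPosDefSymm A) : Integrable (buildingBlock (n := n) α A b) := by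
  obtain ⟨ε, hε, hkey⟩ := exists_eps hA
  refine (integrable_master (M := ∑ j, ‖b j‖) hε (∑ j, α j)).mono'
    bb_continuous.aestronglyMeasurable ?_
  filter_upwards with x using bb_norm_le hkey x

lemma bb_prod_integrable {α β : Fin n → ℕ} {A₁ A₂ : X →ₗ[ℝ] X} {b₁ b₂ : Fin n → ℂ}
    (h₁ : IsPosDefSymm A₁) (h₂ : IsPosDefSymm A₂) (x : X) :
    Integrable fun y : X => buildingBlock α A₁ b₁ y * buildingBlock β A₂ b₂ (x - y) := by
  obtain ⟨ε, hε, hkey⟩ := exists_eps h₁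
  have hkey₂ : ∀ z : X, (0:ℝ) * ‖z‖ ^ 2 ≤ ⟪A₂ z, z⟫ := fun z => by
    simpa using posdef_nonneg h₂ z
  set K₁ := ∑ j, α j with hK₁
  set K₂ := ∑ j, β j with hK₂
  set M₁ := ∑ j, ‖b₁ j‖ with hM₁
  set M₂ := ∑ j, ‖b₂ j‖ with hM₂
  have hM₁n : 0 ≤ M₁ := Finset.sum_nonneg fun j _ => norm_nonneg _
  have hM₂n : 0 ≤ M₂ := Finset.sum_nonneg fun j _ => norm_nonneg _
  have master := ((integrable_master (n := n) (M := M₁ + M₂) hε (K₁ + K₂)).const_mul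
    ((1+‖x‖) ^ K₂ * rexp (M₂ * ‖x‖)))
  have hcont : Continuous fun y : X => buildingBlock α A₁ b₁ y * buildingBlock β A₂ b₂ (x - y) :=
    bb_continuous.mul (bb_continuous.comp (continuous_const.sub continuous_id))
  refine master.mono' hcont.aestronglyMeasurable ?_
  filter_upwards with y
  rw [norm_mul]
  have ht : (0:ℝ) ≤ ‖y‖ := norm_nonneg y
  have hs : (0:ℝ) ≤ ‖x‖ := norm_nonneg x
  have hu : ‖x - y‖ ≤ ‖x‖ + ‖y‖ := norm_sub_le x y
  have b₂' : ‖buildingBlock β A₂ b₂ (x - y)‖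
      ≤ (1+‖x‖) ^ K₂ * (1+‖y‖) ^ K₂ * rexp (M₂ * ‖x‖ + M₂ * ‖y‖) := by
    calc ‖buildingBlock β A₂ b₂ (x - y)‖
        ≤ (1+‖x - y‖) ^ K₂ * rexp (M₂ * ‖x - y‖ - 0 * ‖x - y‖ ^ 2) := bb_norm_le hkey₂ _
      _ ≤ (1+‖x‖) ^ K₂ * (1+‖y‖) ^ K₂ * rexp (M₂ * ‖x‖ + M₂ * ‖y‖) := by
          rw [← mul_pow]
          refine mul_le_mul (pow_le_pow_left₀ (by positivity) (by nlinarith) _)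
            (Real.exp_le_exp.2 (by nlinarith [norm_nonneg (x - y)])) (Real.exp_nonneg _)
            (by positivity)
  calc ‖buildingBlock α A₁ b₁ y‖ * ‖buildingBlock β A₂ b₂ (x - y)‖
      ≤ ((1+‖y‖) ^ K₁ * rexp (M₁ * ‖y‖ - ε * ‖y‖ ^ 2)) *
        ((1+‖x‖) ^ K₂ * (1+‖y‖) ^ K₂ * rexp (M₂ * ‖x‖ + M₂ * ‖y‖)) :=
        mul_le_mul (bb_norm_le hkey y) b₂' (norm_nonneg _) (by positivity)
    _ = (1+‖x‖) ^ K₂ * rexp (M₂ * ‖x‖) * ((1+‖y‖) ^ (K₁ + K₂) * rexp ((M₁ + M₂) * ‖y‖ - ε * ‖y‖ ^ 2)) := by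
        rw [pow_add,
          show (M₁ + M₂) * ‖y‖ - ε * ‖y‖ ^ 2 = (M₁ * ‖y‖ - ε * ‖y‖ ^ 2) + M₂ * ‖y‖ by ring,
          show M₂ * ‖x‖ + M₂ * ‖y‖ = M₂ * ‖x‖ + M₂ * ‖y‖ from rfl,
          Real.exp_add, Real.exp_add]
        ring

def PolyFun {n : ℕ} (p : EuclideanSpace ℝ (Fin n) → ℂ) : Prop :=
  p ∈ Algebra.adjoin ℂ {g : EuclideanSpace ℝ (Fin n) → ℂ | ∃ i, g = fun x => ((x i : ℝ) : ℂ)}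

lemma polyFun_const (c : ℂ) : PolyFun (fun _ : X => c) := by
  have : (fun _ : X => c) = algebraMap ℂ (EuclideanSpace ℝ (Fin n) → ℂ) c := rfl
  rw [this]
  exact Subalgebra.algebraMap_mem _ c

lemma polyFun_coord (i : Fin n) : PolyFun (fun x : X => ((x i : ℝ) : ℂ)) :=
  Algebra.subset_adjoin ⟨i, rfl⟩

lemma polyFun_mul {p q : X → ℂ} (hp : PolyFun p) (hq : PolyFun q) :
    PolyFun (fun x => p x * q x) := Subalgebra.mul_mem _ hp hq

lemma polyFun_pow {p : X → ℂ} (hp : PolyFun p) (k : ℕ) :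
    PolyFun (fun x => p x ^ k) := by
  induction k with
  | zero => simpa using polyFun_const (n := n) 1
  | succ m ih => simpa [pow_succ] using polyFun_mul ih hp

lemma polyFun_sub {p q : X → ℂ} (hp : PolyFun p) (hq : PolyFun q) :
    PolyFun (fun x => p x - q x) := Subalgebra.sub_mem _ hp hq

lemma lin_expand (T : X →ₗ[ℝ] X) (x : X) (j : Fin n) :
    T x j = ∑ i, x i * T (EuclideanSpace.single i (1:ℝ)) j := by
  have hx : ∑ i, x i • EuclideanSpace.single i (1:ℝ) = x := by
    ext j
    rw [show (∑ i, x i • EuclideanSpace.single i (1:ℝ)) j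
        = EuclideanSpace.projₗ (𝕜 := ℝ) j (∑ i, x i • EuclideanSpace.single i (1:ℝ)) from rfl,
      map_sum]
    simp [EuclideanSpace.single_apply]
  conv_lhs => rw [← hx]
  rw [map_sum, show (∑ i, T (x i • EuclideanSpace.single i (1:ℝ))) j
      = EuclideanSpace.projₗ (𝕜 := ℝ) j (∑ i, T (x i • EuclideanSpace.single i (1:ℝ))) from rfl,
    map_sum]
  simp [LinearMap.map_smul]

lemma polyFun_lin (T : X →ₗ[ℝ] X) (j : Fin n) :
    PolyFun (fun x : X => ((T x j : ℝ) : ℂ)) := by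
  have heq : (fun x : X => ((T x j : ℝ) : ℂ))
      = ∑ i : Fin n, (fun x : X =>
          ((T (EuclideanSpace.single i (1:ℝ)) j : ℝ) : ℂ) * ((x i : ℝ) : ℂ)) := by
    funext x
    rw [Finset.sum_apply, lin_expand T x j]
    push_cast
    exact Finset.sum_congr rfl fun i _ => mul_comm _ _
  rw [heq]
  exact Subalgebra.sum_mem _ fun i _ =>
    Subalgebra.mul_mem _ (polyFun_const _) (polyFun_coord i)

lemma nice_coord_mul {i : Fin n} {f : X → ℂ} (hf : IsNice f) :
    IsNice (fun x => ((x i : ℝ) : ℂ) * f x) := by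
  have hf' : f ∈ Submodule.span ℂ {g : EuclideanSpace ℝ (Fin n) → ℂ |
      ∃ α A b, IsPosDefSymm A ∧ g = buildingBlock α A b} := hf
  clear hf
  induction hf' using Submodule.span_induction with
  | mem g hg =>
    obtain ⟨α, A, b, hA, rfl⟩ := hg
    apply Submodule.subset_span
    refine ⟨Function.update α i (α i + 1), A, b, hA, ?_⟩
    funext x
    unfold buildingBlock
    have key : (∏ j, ((x j : ℝ) : ℂ) ^ Function.update α i (α i + 1) j)
        = ((x i : ℝ) : ℂ) * ∏ j, ((x j : ℝ) : ℂ) ^ α j := by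
      have h1 : (fun j => ((x j : ℝ) : ℂ) ^ Function.update α i (α i + 1) j)
          = Function.update (fun j => ((x j : ℝ) : ℂ) ^ α j) i (((x i : ℝ) : ℂ) ^ (α i + 1)) := by
        funext j
        rcases eq_or_ne j i with rfl | hj
        · simp
        · simp [Function.update_of_ne hj]
      rw [h1, Finset.prod_update_of_mem (Finset.mem_univ i),
        ← Finset.prod_erase_mul Finset.univ _ (Finset.mem_univ i)]
      rw [pow_succ]
      ring_nf
      simp [Finset.erase_eq]
    rw [key]
    ring
  | zero =>
    have h0 : (fun x : X => ((x i : ℝ) : ℂ) * (0 : X → ℂ) x) = (0 : X → ℂ) := by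
      funext x; simp
    rw [h0]; exact Submodule.zero_mem _
  | add u v hu hv ihu ihv =>
    have : (fun x => ((x i : ℝ) : ℂ) * (u + v) x)
        = (fun x => ((x i : ℝ) : ℂ) * u x) + (fun x => ((x i : ℝ) : ℂ) * v x) := by
      funext x; simp only [Pi.add_apply]; ring
    rw [this]; exact Submodule.add_mem _ ihu ihv
  | smul c u hu ihu =>
    have : (fun x => ((x i : ℝ) : ℂ) * (c • u) x)
        = c • (fun x => ((x i : ℝ) : ℂ) * u x) := by
      funext x; simp only [Pi.smul_apply, smul_eq_mul]; ring
    rw [this]; exact Submodule.smul_mem _ _ ihu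

lemma polyFun_mul_nice {p : X → ℂ} (hp : PolyFun p) :
    ∀ f : X → ℂ, IsNice f → IsNice (fun x => p x * f x) := by
  induction hp using Algebra.adjoin_induction with
  | mem q hq =>
    obtain ⟨i, rfl⟩ := hq
    exact fun f hf => nice_coord_mul hf
  | algebraMap c =>
    intro f hf
    have : (fun x => (algebraMap ℂ (EuclideanSpace ℝ (Fin n) → ℂ) c) x * f x) = c • f := by
      funext x; simp [Pi.smul_apply, smul_eq_mul]
    rw [this]; exact Submodule.smul_mem _ _ hf
  | add u v hu hv ihu ihv =>
    intro f hf
    have : (fun x => (u + v) x * f x)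
        = (fun x => u x * f x) + (fun x => v x * f x) := by
      funext x; simp [Pi.add_apply]; ring
    rw [this]; exact Submodule.add_mem _ (ihu f hf) (ihv f hf)
  | mul u v hu hv ihu ihv =>
    intro f hf
    have : (fun x => (u * v) x * f x) = (fun x => u x * (v x * f x)) := by
      funext x; simp [Pi.mul_apply]; ring
    rw [this]; exact ihu _ (ihv f hf)

lemma nice_prod_integrable {f₁ f₂ : X → ℂ} (h₁ : IsNice f₁) (h₂ : IsNice f₂) (x : X) :
    Integrable fun y : X => f₁ y * f₂ (x - y) := by
  have h₁' : f₁ ∈ Submodule.span ℂ {g : EuclideanSpace ℝ (Fin n) → ℂ |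
      ∃ α A b, IsPosDefSymm A ∧ g = buildingBlock α A b} := h₁
  have h₂' : f₂ ∈ Submodule.span ℂ {g : EuclideanSpace ℝ (Fin n) → ℂ |
      ∃ α A b, IsPosDefSymm A ∧ g = buildingBlock α A b} := h₂
  clear h₁ h₂
  induction h₁' using Submodule.span_induction with
  | mem g hg =>
    obtain ⟨α, A, b, hA, rfl⟩ := hg
    induction h₂' using Submodule.span_induction with
    | mem g' hg' =>
      obtain ⟨β, A', b', hA', rfl⟩ := hg'
      exact bb_prod_integrable hA hA' x
    | zero => simpa using integrable_zero X ℂ (volume : Measure X)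
    | add u v hu hv ihu ihv => simp only [Pi.add_apply, mul_add]; exact ihu.add ihv
    | smul c u hu ihu =>
      simpa [Pi.smul_apply, smul_eq_mul, mul_left_comm] using ihu.const_mul c
  | zero => simpa using integrable_zero X ℂ (volume : Measure X)
  | add u v hu hv ihu ihv => simp only [Pi.add_apply, add_mul]; exact ihu.add ihv
  | smul c u hu ihu =>
    simpa [Pi.smul_apply, smul_eq_mul, mul_assoc] using ihu.const_mul c

lemma binom_expand (a u w : ℂ) (p q : ℕ) :
    (u + a) ^ p * (w - u) ^ q
      = ∑ kl ∈ (Finset.range (p+1)) ×ˢ (Finset.range (q+1)),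
          ((p.choose kl.1 : ℂ) * a ^ (p - kl.1) * (q.choose kl.2 : ℂ) * w ^ (q - kl.2)
            * (-1 : ℂ) ^ kl.2) * u ^ (kl.1 + kl.2) := by
  rw [add_pow, show w - u = -u + w by ring, add_pow, Finset.sum_mul_sum,
    Finset.sum_product]
  refine Finset.sum_congr rfl fun k hk => Finset.sum_congr rfl fun l hl => ?_
  have hneg : (-u) ^ (k, l).2 = (-1 : ℂ) ^ (k, l).2 * u ^ (k, l).2 := by
    rw [← neg_one_mul, mul_pow]
  rw [hneg]
  ring

lemma polyFun_prod {ι : Type*} [DecidableEq ι] (s : Finset ι) (f : ι → X → ℂ)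
    (hf : ∀ j, PolyFun (f j)) : PolyFun (fun x : X => ∏ j ∈ s, f j x) := by
  induction s using Finset.induction with
  | empty => simpa using polyFun_const (n := n) 1
  | @insert a s ha ih =>
    simp only [Finset.prod_insert ha]
    exact polyFun_mul (hf a) ih

lemma bb_conv_nice {α β : Fin n → ℕ} {A₁ A₂ : X →ₗ[ℝ] X} {b₁ b₂ : Fin n → ℂ}
    (h₁ : IsPosDefSymm A₁) (h₂ : IsPosDefSymm A₂) :
    IsNice (fun x : X => ∫ y : X, buildingBlock α A₁ b₁ y * buildingBlock β A₂ b₂ (x - y)) := by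
  classical
  set B : X →ₗ[ℝ] X := A₁ + A₂ with hBdef
  have hBapp : ∀ u : X, B u = A₁ u + A₂ u := fun u => rfl
  have hBsymm : ∀ u v : X, ⟪B u, v⟫ = ⟪u, B v⟫ := by
    intro u v
    rw [hBapp, hBapp, inner_add_left, inner_add_right, h₁.1, h₂.1]
  have hBpos : ∀ u : X, u ≠ 0 → 0 < ⟪B u, u⟫ := by
    intro u hu
    rw [hBapp, inner_add_left]
    have := h₁.2 u hu
    have := posdef_nonneg h₂ u
    linarith
  have hB : IsPosDefSymm B := ⟨hBsymm, hBpos⟩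
  have hinj : Function.Injective B := by
    rw [← LinearMap.ker_eq_bot, LinearMap.ker_eq_bot']
    intro m hm
    by_contra hm0
    have h := hB.2 m hm0
    rw [hm] at h
    simp at h
  have hbij : Function.Bijective B := ⟨hinj, LinearMap.surjective_of_injective hinj⟩
  set Be : X ≃ₗ[ℝ] X := LinearEquiv.ofBijective B hbij with hBedef
  set C : X →ₗ[ℝ] X := (Be.symm : X →ₗ[ℝ] X).comp A₂ with hCdef
  have hBC : ∀ u : X, B (C u) = A₂ u := by
    intro u
    have h := Be.apply_symm_apply (A₂ u)
    have h2 : Be (Be.symm (A₂ u)) = B (Be.symm (A₂ u)) := by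
      rw [hBedef]; rfl
    rw [h2] at h
    exact h
  set At : X →ₗ[ℝ] X := A₂ - A₂.comp C with hAtdef
  have hAtapp : ∀ u : X, At u = A₂ u - A₂ (C u) := fun u => rfl
  -- cross terms vanish
  have cross : ∀ x z : X, ⟪A₁ (C x), z⟫ - ⟪A₂ (x - C x), z⟫ = 0 := by
    intro x z
    rw [map_sub, inner_sub_left]
    have h : ⟪A₁ (C x), z⟫ + ⟪A₂ (C x), z⟫ = ⟪A₂ x, z⟫ := by
      rw [← inner_add_left, show A₁ (C x) + A₂ (C x) = B (C x) from rfl, hBC]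
    linarith
  -- the constant (in z) part of the square completion
  have konst : ∀ x : X, ⟪A₁ (C x), C x⟫ + ⟪A₂ (x - C x), x - C x⟫ = ⟪At x, x⟫ := by
    intro x
    have e1 : ⟪A₂ (x - C x), x - C x⟫
        = ⟪A₂ x, x⟫ - 2*⟪A₂ x, C x⟫ + ⟪A₂ (C x), C x⟫ := by
      have i1 : ⟪A₂ (x - C x), x - C x⟫ = ⟪A₂ x, x - C x⟫ - ⟪A₂ (C x), x - C x⟫ := by
        rw [map_sub, inner_sub_left]
      have i2 : ⟪A₂ x, x - C x⟫ = ⟪A₂ x, x⟫ - ⟪A₂ x, C x⟫ := by rw [inner_sub_right]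
      have i3 : ⟪A₂ (C x), x - C x⟫ = ⟪A₂ (C x), x⟫ - ⟪A₂ (C x), C x⟫ := by
        rw [inner_sub_right]
      have i4 : ⟪A₂ (C x), x⟫ = ⟪A₂ x, C x⟫ := by rw [h₂.1, real_inner_comm]
      rw [i1, i2, i3, i4]; ring
    have e2 : ⟪A₁ (C x), C x⟫ + ⟪A₂ (C x), C x⟫ = ⟪A₂ x, C x⟫ := by
      rw [← inner_add_left, show A₁ (C x) + A₂ (C x) = B (C x) from rfl, hBC]
    have e3 : ⟪At x, x⟫ = ⟪A₂ x, x⟫ - ⟪A₂ x, C x⟫ := by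
      rw [hAtapp, inner_sub_left]
      have : ⟪A₂ (C x), x⟫ = ⟪A₂ x, C x⟫ := by rw [h₂.1, real_inner_comm]
      linarith
    linarith
  -- completing the square
  have quad : ∀ x z : X,
      ⟪A₁ (z + C x), z + C x⟫ + ⟪A₂ (x - (z + C x)), x - (z + C x)⟫
        = ⟪B z, z⟫ + ⟪At x, x⟫ := by
    intro x z
    have e0 : x - (z + C x) = (x - C x) - z := by abel
    have e1 : ⟪A₁ (z + C x), z + C x⟫
        = ⟪A₁ z, z⟫ + 2*⟪A₁ (C x), z⟫ + ⟪A₁ (C x), C x⟫ := by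
      have i1 : ⟪A₁ (z + C x), z + C x⟫ = ⟪A₁ z, z + C x⟫ + ⟪A₁ (C x), z + C x⟫ := by
        rw [map_add, inner_add_left]
      have i2 : ⟪A₁ z, z + C x⟫ = ⟪A₁ z, z⟫ + ⟪A₁ z, C x⟫ := by rw [inner_add_right]
      have i3 : ⟪A₁ (C x), z + C x⟫ = ⟪A₁ (C x), z⟫ + ⟪A₁ (C x), C x⟫ := by
        rw [inner_add_right]
      have i4 : ⟪A₁ z, C x⟫ = ⟪A₁ (C x), z⟫ := by rw [h₁.1, real_inner_comm]
      rw [i1, i2, i3, i4]; ring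
    have e2 : ⟪A₂ ((x - C x) - z), (x - C x) - z⟫
        = ⟪A₂ (x - C x), x - C x⟫ - 2*⟪A₂ (x - C x), z⟫ + ⟪A₂ z, z⟫ := by
      have i1 : ⟪A₂ ((x - C x) - z), (x - C x) - z⟫
          = ⟪A₂ (x - C x), (x - C x) - z⟫ - ⟪A₂ z, (x - C x) - z⟫ := by
        rw [map_sub, inner_sub_left]
      have i2 : ⟪A₂ (x - C x), (x - C x) - z⟫
          = ⟪A₂ (x - C x), x - C x⟫ - ⟪A₂ (x - C x), z⟫ := by rw [inner_sub_right]
      have i3 : ⟪A₂ z, (x - C x) - z⟫ = ⟪A₂ z, x - C x⟫ - ⟪A₂ z, z⟫ := by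
        rw [inner_sub_right]
      have i4 : ⟪A₂ z, x - C x⟫ = ⟪A₂ (x - C x), z⟫ := by rw [h₂.1, real_inner_comm]
      rw [i1, i2, i3, i4]; ring
    have e3 : ⟪A₁ z, z⟫ + ⟪A₂ z, z⟫ = ⟪B z, z⟫ := by
      rw [← inner_add_left]; rfl
    have e4 := cross x z
    have e5 := konst x
    rw [e0, e1, e2]
    linarith
  -- At is positive definite symmetric
  have hAt : IsPosDefSymm At := by
    constructor
    · intro u v
      rw [hAtapp, hAtapp, inner_sub_left, inner_sub_right, h₂.1]
      have h : ⟪A₂ (C u), v⟫ = ⟪u, A₂ (C v)⟫ := by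
        rw [h₂.1]
        rw [show A₂ v = B (C v) from (hBC v).symm]
        rw [← hBsymm]
        rw [show B (C u) = A₂ u from hBC u]
        exact h₂.1 u (C v)
      rw [h]
    · intro u hu
      have hq := konst u
      rcases eq_or_ne (C u) 0 with hCu | hCu
      · exfalso
        have : A₂ u = 0 := by rw [← hBC u, hCu, map_zero]
        have h := h₂.2 u hu
        rw [this] at h
        simp at h
      · have t1 : 0 < ⟪A₁ (C u), C u⟫ := h₁.2 _ hCu
        have t2 : 0 ≤ ⟪A₂ (u - C u), u - C u⟫ := posdef_nonneg h₂ _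
        linarith
  -- complex linear coefficients
  set c : Fin n → ℂ := fun j => b₁ j - b₂ j with hcdef
  set bc : Fin n → ℂ := fun i => b₂ i
      + ∑ j, (b₁ j - b₂ j) * (((C (EuclideanSpace.single i (1:ℝ))) j : ℝ) : ℂ) with hbcdef
  have hd : ∀ (x : X) (j : Fin n), (((C x) j : ℝ) : ℂ)
      = ∑ i, ((x i : ℝ) : ℂ) * (((C (EuclideanSpace.single i (1:ℝ))) j : ℝ) : ℂ) := by
    intro x j
    rw [lin_expand C x j]
    push_cast
    rfl
  have lin : ∀ x z : X,
      (∑ j, b₁ j * ((z j + (C x) j : ℝ) : ℂ))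
        + (∑ j, b₂ j * ((x j - (z j + (C x) j) : ℝ) : ℂ))
      = (∑ j, c j * ((z j : ℝ) : ℂ)) + ∑ i, bc i * ((x i : ℝ) : ℂ) := by
    intro x z
    have step1 : (∑ j, b₁ j * ((z j + (C x) j : ℝ) : ℂ))
          + (∑ j, b₂ j * ((x j - (z j + (C x) j) : ℝ) : ℂ))
        = (∑ j, c j * ((z j : ℝ) : ℂ))
          + ((∑ j, (b₁ j - b₂ j) * (((C x) j : ℝ) : ℂ)) + ∑ j, b₂ j * ((x j : ℝ) : ℂ)) := by
      rw [← Finset.sum_add_distrib, ← Finset.sum_add_distrib, ← Finset.sum_add_distrib]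
      refine Finset.sum_congr rfl fun j _ => ?_
      rw [hcdef]
      push_cast
      ring
    rw [step1]
    congr 1
    have step2 : (∑ j, (b₁ j - b₂ j) * (((C x) j : ℝ) : ℂ))
        = ∑ i, (∑ j, (b₁ j - b₂ j) * (((C (EuclideanSpace.single i (1:ℝ))) j : ℝ) : ℂ))
            * ((x i : ℝ) : ℂ) := by
      rw [show (∑ j, (b₁ j - b₂ j) * (((C x) j : ℝ) : ℂ))
          = ∑ j, ∑ i, (b₁ j - b₂ j) * ((((C (EuclideanSpace.single i (1:ℝ))) j : ℝ) : ℂ)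
              * ((x i : ℝ) : ℂ)) from Finset.sum_congr rfl fun j _ => by
            rw [hd x j, Finset.mul_sum]
            exact Finset.sum_congr rfl fun i _ => by ring]
      rw [Finset.sum_comm]
      refine Finset.sum_congr rfl fun i _ => ?_
      rw [Finset.sum_mul]
      exact Finset.sum_congr rfl fun j _ => by ring
    rw [step2, ← Finset.sum_add_distrib]
    refine Finset.sum_congr rfl fun i _ => ?_
    rw [hbcdef]
    ring
  -- the Gaussian factor in x
  set E : X → ℂ := fun x => Complex.exp (-((⟪At x, x⟫ : ℝ) : ℂ)
      + ∑ i, bc i * ((x i : ℝ) : ℂ)) with hEdef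
  have hE : IsNice E := by
    apply Submodule.subset_span
    refine ⟨fun _ => 0, At, bc, hAt, ?_⟩
    funext x
    simp only [hEdef]
    unfold buildingBlock
    simp
  -- pointwise rewriting of the shifted integrand
  have hptw : ∀ x z : X,
      buildingBlock α A₁ b₁ (z + C x) * buildingBlock β A₂ b₂ (x - (z + C x))
      = ((∏ j, ((z j + (C x) j : ℝ) : ℂ) ^ α j)
          * ∏ j, ((x j - (z j + (C x) j) : ℝ) : ℂ) ^ β j)
        * Complex.exp (-((⟪B z, z⟫ : ℝ) : ℂ) + ∑ j, c j * ((z j : ℝ) : ℂ))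
        * E x := by
    intro x z
    have hq' : ((⟪A₁ (z + C x), z + C x⟫ : ℝ) : ℂ)
        + ((⟪A₂ (x - (z + C x)), x - (z + C x)⟫ : ℝ) : ℂ)
        = ((⟪B z, z⟫ : ℝ) : ℂ) + ((⟪At x, x⟫ : ℝ) : ℂ) := by
      exact_mod_cast congrArg (fun r : ℝ => (r : ℂ)) (quad x z)
    have hexp : (-((⟪A₁ (z + C x), z + C x⟫ : ℝ) : ℂ) + ∑ j, b₁ j * ((z j + (C x) j : ℝ) : ℂ))
        + (-((⟪A₂ (x - (z + C x)), x - (z + C x)⟫ : ℝ) : ℂ)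
            + ∑ j, b₂ j * ((x j - (z j + (C x) j) : ℝ) : ℂ))
        = (-((⟪B z, z⟫ : ℝ) : ℂ) + ∑ j, c j * ((z j : ℝ) : ℂ))
          + (-((⟪At x, x⟫ : ℝ) : ℂ) + ∑ i, bc i * ((x i : ℝ) : ℂ)) := by
      linear_combination (lin x z) - hq'
    unfold buildingBlock
    simp only [hEdef]
    simp only [PiLp.add_apply, PiLp.sub_apply]
    rw [mul_mul_mul_comm, ← Complex.exp_add, hexp, Complex.exp_add, ← mul_assoc]
  set Hc : X → Fin n → ℕ × ℕ → ℂ := fun x j kl =>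
    ((α j).choose kl.1 : ℂ) * (((C x) j : ℝ) : ℂ) ^ (α j - kl.1)
      * ((β j).choose kl.2 : ℂ) * (((x j : ℝ) : ℂ) - (((C x) j : ℝ) : ℂ)) ^ (β j - kl.2)
      * (-1 : ℂ) ^ kl.2 with hHcdef
  set S : Finset (Fin n → ℕ × ℕ) :=
    Fintype.piFinset fun j => (Finset.range (α j + 1)) ×ˢ (Finset.range (β j + 1)) with hSdef
  set γ : (Fin n → ℕ × ℕ) → Fin n → ℕ := fun m j => (m j).1 + (m j).2 with hγdef
  set H : (Fin n → ℕ × ℕ) → X → ℂ := fun m x => ∏ j, Hc x j (m j) with hHdef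
  have hbinj : ∀ (x z : X) (j : Fin n),
      ((z j + (C x) j : ℝ) : ℂ) ^ α j * ((x j - (z j + (C x) j) : ℝ) : ℂ) ^ β j
      = ∑ kl ∈ (Finset.range (α j + 1)) ×ˢ (Finset.range (β j + 1)),
          Hc x j kl * ((z j : ℝ) : ℂ) ^ (kl.1 + kl.2) := by
    intro x z j
    have hb := binom_expand (((C x) j : ℝ) : ℂ) ((z j : ℝ) : ℂ)
      ((((x j : ℝ) : ℂ)) - (((C x) j : ℝ) : ℂ)) (α j) (β j)
    have ha1 : ((z j + (C x) j : ℝ) : ℂ) = ((z j : ℝ) : ℂ) + (((C x) j : ℝ) : ℂ) := by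
      push_cast; ring
    have ha2 : ((x j - (z j + (C x) j) : ℝ) : ℂ)
        = ((((x j : ℝ) : ℂ)) - (((C x) j : ℝ) : ℂ)) - ((z j : ℝ) : ℂ) := by
      push_cast; ring
    rw [ha1, ha2, hb]
  have hPexp : ∀ x z : X,
      (∏ j, ((z j + (C x) j : ℝ) : ℂ) ^ α j) * ∏ j, ((x j - (z j + (C x) j) : ℝ) : ℂ) ^ β j
      = ∑ m ∈ S, H m x * ∏ j, ((z j : ℝ) : ℂ) ^ γ m j := by
    intro x z
    rw [← Finset.prod_mul_distrib]
    rw [Finset.prod_congr rfl fun j _ => hbinj x z j]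
    rw [Finset.prod_univ_sum]
    refine Finset.sum_congr rfl fun m hm => ?_
    rw [Finset.prod_mul_distrib]
  have hEint : ∀ m : Fin n → ℕ × ℕ, Integrable (buildingBlock (γ m) B c) :=
    fun m => bb_integrable hB
  have key : (fun x : X => ∫ y : X, buildingBlock α A₁ b₁ y * buildingBlock β A₂ b₂ (x - y))
      = ∑ m ∈ S, (∫ z : X, buildingBlock (γ m) B c z) • fun x => H m x * E x := by
    funext x
    rw [Finset.sum_apply]
    have h1 : (∫ y : X, buildingBlock α A₁ b₁ y * buildingBlock β A₂ b₂ (x - y))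
        = ∫ z : X, buildingBlock α A₁ b₁ (z + C x) * buildingBlock β A₂ b₂ (x - (z + C x)) :=
      (integral_add_right_eq_self
        (fun y => buildingBlock α A₁ b₁ y * buildingBlock β A₂ b₂ (x - y)) (C x)).symm
    rw [h1]
    have h2 : (fun z : X =>
          buildingBlock α A₁ b₁ (z + C x) * buildingBlock β A₂ b₂ (x - (z + C x)))
        = fun z : X => ∑ m ∈ S, (H m x * E x) * buildingBlock (γ m) B c z := by
      funext z
      rw [hptw x z, hPexp x z, Finset.sum_mul, Finset.sum_mul]
      refine Finset.sum_congr rfl fun m hm => ?_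
      unfold buildingBlock
      ring
    rw [h2, integral_finset_sum S fun m _ => ((hEint m).const_mul _)]
    refine Finset.sum_congr rfl fun m _ => ?_
    rw [MeasureTheory.integral_const_mul]
    simp only [Pi.smul_apply, smul_eq_mul]
    ring
  rw [key]
  refine Submodule.sum_mem _ fun m _ => Submodule.smul_mem _ _ ?_
  refine polyFun_mul_nice ?_ E hE
  simp only [hHdef]
  apply polyFun_prod
  intro j
  simp only [hHcdef]
  exact polyFun_mul (polyFun_mul (polyFun_mul (polyFun_mul (polyFun_const _)
    (polyFun_pow (polyFun_lin C j) _)) (polyFun_const _))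
    (polyFun_pow (polyFun_sub (polyFun_coord j) (polyFun_lin C j)) _)) (polyFun_const _)

end NiceAux
end


open NiceAux in
/-- The convolution of two nice functions is nice. -/
theorem isNice_convolution (n : ℕ)
    (f₁ f₂ : EuclideanSpace ℝ (Fin n) → ℂ) (hf₁ : IsNice f₁) (hf₂ : IsNice f₂) :
    IsNice (fun x => ∫ y : EuclideanSpace ℝ (Fin n), f₁ y * f₂ (x - y)) := by
  have h₁' : f₁ ∈ Submodule.span ℂ {g : EuclideanSpace ℝ (Fin n) → ℂ |
      ∃ α A b, IsPosDefSymm A ∧ g = buildingBlock α A b} := hf₁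
  clear hf₁
  induction h₁' using Submodule.span_induction with
  | mem g hg =>
    have hgn : IsNice g := Submodule.subset_span hg
    have h₂' : f₂ ∈ Submodule.span ℂ {g : EuclideanSpace ℝ (Fin n) → ℂ |
        ∃ α A b, IsPosDefSymm A ∧ g = buildingBlock α A b} := hf₂
    clear hf₂
    induction h₂' using Submodule.span_induction with
    | mem g' hg' =>
      obtain ⟨α, A, b, hA, rfl⟩ := hg
      obtain ⟨β, A', b', hA', rfl⟩ := hg'
      exact bb_conv_nice hA hA'
    | zero =>
      have h0 : (fun x => ∫ y : EuclideanSpace ℝ (Fin n), g y * (0 : EuclideanSpace ℝ (Fin n) → ℂ) (x - y))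
          = (0 : EuclideanSpace ℝ (Fin n) → ℂ) := by
        funext x; simp
      rw [h0]; exact Submodule.zero_mem _
    | add u v hu hv ihu ihv =>
      have hadd : (fun x => ∫ y : EuclideanSpace ℝ (Fin n), g y * (u + v) (x - y))
          = (fun x => ∫ y : EuclideanSpace ℝ (Fin n), g y * u (x - y))
            + (fun x => ∫ y : EuclideanSpace ℝ (Fin n), g y * v (x - y)) := by
        funext x
        simp only [Pi.add_apply, mul_add]
        rw [MeasureTheory.integral_add (nice_prod_integrable hgn hu x)
          (nice_prod_integrable hgn hv x)]
      rw [hadd]; exact Submodule.add_mem _ ihu ihv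
    | smul a u hu ihu =>
      have hsmul : (fun x => ∫ y : EuclideanSpace ℝ (Fin n), g y * (a • u) (x - y))
          = a • fun x => ∫ y : EuclideanSpace ℝ (Fin n), g y * u (x - y) := by
        funext x
        simp only [Pi.smul_apply, smul_eq_mul]
        have hcomm : ∀ y, g y * (a * u (x - y)) = a * (g y * u (x - y)) := fun y => by ring
        simp only [hcomm]
        rw [MeasureTheory.integral_const_mul]
      rw [hsmul]; exact Submodule.smul_mem _ _ ihu
  | zero =>
    have h0 : (fun x => ∫ y : EuclideanSpace ℝ (Fin n),
          (0 : EuclideanSpace ℝ (Fin n) → ℂ) y * f₂ (x - y))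
        = (0 : EuclideanSpace ℝ (Fin n) → ℂ) := by
      funext x; simp
    rw [h0]; exact Submodule.zero_mem _
  | add u v hu hv ihu ihv =>
    have hadd : (fun x => ∫ y : EuclideanSpace ℝ (Fin n), (u + v) y * f₂ (x - y))
        = (fun x => ∫ y : EuclideanSpace ℝ (Fin n), u y * f₂ (x - y))
          + (fun x => ∫ y : EuclideanSpace ℝ (Fin n), v y * f₂ (x - y)) := by
      funext x
      simp only [Pi.add_apply, add_mul]
      rw [MeasureTheory.integral_add (nice_prod_integrable hu hf₂ x)
        (nice_prod_integrable hv hf₂ x)]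
    rw [hadd]; exact Submodule.add_mem _ ihu ihv
  | smul a u hu ihu =>
    have hsmul : (fun x => ∫ y : EuclideanSpace ℝ (Fin n), (a • u) y * f₂ (x - y))
        = a • fun x => ∫ y : EuclideanSpace ℝ (Fin n), u y * f₂ (x - y) := by
      funext x
      simp only [Pi.smul_apply, smul_eq_mul]
      have hcomm : ∀ y, a * u y * f₂ (x - y) = a * (u y * f₂ (x - y)) := fun y => by ring
      simp only [hcomm]
      rw [MeasureTheory.integral_const_mul]
    rw [hsmul]; exact Submodule.smul_mem _ _ ihu
end
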